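/- arXiv:1205.0357 — 3 statements merged into one kernel-verified Lean document; each statement's English description precedes it below -/
import Mathlib

section
/- For all total canonical term graphs g and h over a signature Σ, the rigid similarity equals the ⊥-depth of the greatest lower bound: sim†(g,h) = ⊥-depth(g ⊓ h), where g ⊓ h is the greatest lower bound of {g,h} in the complete semilattice of canonical partial term graphs ordered by ≤⊥r, and ⊥-depth(k) is the minimum depth of a ⊥-labelled node of k (ω if k has no ⊥-node). -/
set_option autoImplicit false

namespace TGR

/-- A signature: a type of symbols, each with a finite arity. -/
structure Signature where
  Sym : Type
  ar : Sym → ℕ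

/-- The signature `Σ_⊥`: `Σ` extended by a fresh nullary symbol `⊥` (here `none`). -/
def Signature.bot (S : Signature) : Signature where
  Sym := Option S.Sym
  ar := fun o => match o with
    | none => 0
    | some f => S.ar f

/-- A rooted graph over a signature `S` with nodes `N`: a labelling, a successor
function respecting arities, and a root node. -/
structure TermGraph (S : Signature) (N : Type) where
  lab : N → S.Sym
  suc : (n : N) → Fin (S.ar (lab n)) → N
  root : N

namespace TermGraph

variable {S : Signature} {N M K : Type}

/-- `g.IsPos π n`: `π` is a position (path of successor indices from the root) of node `n`. -/
inductive IsPos (g : TermGraph S N) : List ℕ → N → Prop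
  | root : IsPos g [] g.root
  | step {π : List ℕ} {n : N} (h : IsPos g π n) (i : Fin (S.ar (g.lab n))) :
      IsPos g (π ++ [(i : ℕ)]) (g.suc n i)

/-- All nodes are reachable from the root. -/
def Reachable (g : TermGraph S N) : Prop :=
  ∀ n : N, ∃ π : List ℕ, g.IsPos π n

/-- The set of positions of `g`. -/
def pos (g : TermGraph S N) : Set (List ℕ) :=
  {π | ∃ n : N, g.IsPos π n}

/-- The set of positions of node `n` in `g`. -/
def nodePos (g : TermGraph S N) (n : N) : Set (List ℕ) :=
  {π | g.IsPos π n}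

/-- `π ∼_g π'`: `π` and `π'` are positions of the same node. -/
def Aliases (g : TermGraph S N) (π π' : List ℕ) : Prop :=
  ∃ n : N, g.IsPos π n ∧ g.IsPos π' n

/-- A position is acyclic if it passes no node twice. -/
def IsAcyclicPos (g : TermGraph S N) (π : List ℕ) : Prop :=
  ∀ (π₁ π₂ : List ℕ) (n : N), π₁ <+: π₂ → π₂ <+: π →
    g.IsPos π₁ n → g.IsPos π₂ n → π₁ = π₂

/-- The set of acyclic positions of node `n` in `g`. -/
def nodePosAcy (g : TermGraph S N) (n : N) : Set (List ℕ) :=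
  {π | g.IsPos π n ∧ g.IsAcyclicPos π}

/-- The set of acyclic positions of `g`. -/
def posAcy (g : TermGraph S N) : Set (List ℕ) :=
  {π | (∃ n : N, g.IsPos π n) ∧ g.IsAcyclicPos π}

/-- The depth of a node: the minimal length of its positions. -/
noncomputable def depth (g : TermGraph S N) (n : N) : ℕ :=
  sInf {k : ℕ | ∃ π : List ℕ, g.IsPos π n ∧ π.length = k}

open Classical in
/-- The (unique) node at a position. -/
noncomputable def nodeAt (g : TermGraph S N) (π : List ℕ) : N :=
  if h : ∃ n : N, g.IsPos π n then h.choose else g.root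

/-- The label `g(π)` at a position. -/
noncomputable def labAt (g : TermGraph S N) (π : List ℕ) : S.Sym :=
  g.lab (g.nodeAt π)

/-- `Δ`-homomorphism: root, labelling and successor conditions, the latter two
suspended on `Δ`-labelled nodes. -/
structure IsDHom (Δ : Set S.Sym) (g : TermGraph S N) (h : TermGraph S M)
    (φ : N → M) : Prop where
  root_eq : φ g.root = h.root
  lab_eq : ∀ n : N, g.lab n ∉ Δ → h.lab (φ n) = g.lab n
  suc_eq : ∀ n : N, g.lab n ∉ Δ → ∀ (i : ℕ) (hi : i < S.ar (g.lab n))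
      (hi' : i < S.ar (h.lab (φ n))),
      φ (g.suc n ⟨i, hi⟩) = h.suc (φ n) ⟨i, hi'⟩

/-- Rigidity: `Pa_g(n) = Pa_h(φ n)` for all non-`Δ`-labelled nodes `n`. -/
def IsRigid (Δ : Set S.Sym) (g : TermGraph S N) (h : TermGraph S M)
    (φ : N → M) : Prop :=
  ∀ n : N, g.lab n ∉ Δ → g.nodePosAcy n = h.nodePosAcy (φ n)

/-- Rigid `Δ`-homomorphism. -/
def IsRigidDHom (Δ : Set S.Sym) (g : TermGraph S N) (h : TermGraph S M)
    (φ : N → M) : Prop :=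
  IsDHom Δ g h φ ∧ IsRigid Δ g h φ

/-- Isomorphism of term graphs: a homomorphism with an inverse homomorphism. -/
def Iso (g : TermGraph S N) (h : TermGraph S M) : Prop :=
  ∃ (φ : N → M) (ψ : M → N), IsDHom ∅ g h φ ∧ IsDHom ∅ h g ψ ∧
    (∀ n : N, ψ (φ n) = n) ∧ (∀ m : M, φ (ψ m) = m)

/-- A partial term graph (over `Σ_⊥`) is total if no node is labelled `⊥`. -/
def Total (g : TermGraph S.bot N) : Prop := ∀ n : N, g.lab n ≠ none

/-- Rigid `⊥`-homomorphism between partial term graphs. -/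
def IsRigidBotHom (g : TermGraph S.bot N) (h : TermGraph S.bot M)
    (φ : N → M) : Prop :=
  IsRigidDHom ({none} : Set (Option S.Sym)) g h φ

/-- The `⊥`-depth of a partial term graph: the minimal depth of a `⊥`-labelled
node, `ω` (`⊤`) if there is none. -/
noncomputable def botDepth (g : TermGraph S.bot N) : ℕ∞ :=
  sInf {d : ℕ∞ | ∃ n : N, g.lab n = none ∧ (g.depth n : ℕ∞) = d}

/-- `m` is an acyclic predecessor of `n`: some acyclic position `π ++ [i]` of `n`
has `π` a position of `m`. -/
def acyPred (g : TermGraph S N) (n : N) : Set N :=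
  {m | ∃ (π : List ℕ) (i : ℕ), (π ++ [i]) ∈ g.nodePosAcy n ∧ g.IsPos π m}

/-- Retained nodes of the truncation at depth `d`: the least set of nodes
containing all nodes of depth `< d` and closed under acyclic predecessors. -/
inductive Retained (g : TermGraph S N) (d : ℕ) : N → Prop
  | shallow {n : N} : g.depth n < d → Retained g d n
  | pred {n m : N} : Retained g d n → m ∈ g.acyPred n → Retained g d m

theorem not_retained_zero {g : TermGraph S N} (n : N) : ¬ g.Retained 0 n := by
  intro h
  induction h with
  | shallow hd => exact Nat.not_lt_zero _ hd
  | pred _ _ ih => exact ih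

/-- Fringe nodes of the truncation at depth `d` (a pair `(n, i)` stands for the
fresh node `n^i`); at depth `0` the fringe is just (a copy of) the root. -/
def IsFringe (g : TermGraph S.bot N) (d : ℕ) (p : N × ℕ) : Prop :=
  if d = 0 then p = (g.root, 0)
  else g.Retained d p.1 ∧ ∃ h : p.2 < S.bot.ar (g.lab p.1),
    (¬ g.Retained d (g.suc p.1 ⟨p.2, h⟩) ∨
      (d - 1 ≤ g.depth p.1 ∧ p.1 ∉ g.acyPred (g.suc p.1 ⟨p.2, h⟩)))

/-- The node set of the rigid truncation: retained nodes plus fringe nodes. -/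
def TNode (g : TermGraph S.bot N) (d : ℕ) : Type :=
  {x : N ⊕ (N × ℕ) // Sum.elim (g.Retained d) (g.IsFringe d) x}

def truncLab (g : TermGraph S.bot N) (d : ℕ) (x : TNode g d) : S.bot.Sym :=
  Sum.elim (fun n => g.lab n) (fun _ => none) x.1

open Classical in
noncomputable def truncSuc (g : TermGraph S.bot N) (d : ℕ) :
    (x : TNode g d) → Fin (S.bot.ar (truncLab g d x)) → TNode g d
  | ⟨Sum.inl n, hn⟩ => fun i =>
      if hf : g.IsFringe d (n, (i : ℕ)) then ⟨Sum.inr (n, (i : ℕ)), hf⟩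
      else
        ⟨Sum.inl (g.suc n ⟨(i : ℕ), i.isLt⟩), by
          show g.Retained d (g.suc n ⟨(i : ℕ), i.isLt⟩)
          rcases Nat.eq_zero_or_pos d with hd | hd
          · subst hd
            exact ((not_retained_zero n) hn).elim
          · by_contra hc
            apply hf
            show g.IsFringe d (n, (i : ℕ))
            unfold IsFringe
            rw [if_neg (Nat.pos_iff_ne_zero.mp hd)]
            exact ⟨hn, i.isLt, Or.inl hc⟩⟩
  | ⟨Sum.inr p, hp⟩ => fun i => absurd i.isLt (Nat.not_lt_zero _)

noncomputable def truncRoot (g : TermGraph S.bot N) (d : ℕ) : TNode g d :=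
  if hd : d = 0 then
    ⟨Sum.inr (g.root, 0), by
      subst hd
      show g.IsFringe 0 (g.root, 0)
      simp [IsFringe]⟩
  else
    ⟨Sum.inl g.root, by
      show g.Retained d g.root
      exact Retained.shallow (lt_of_le_of_lt
        (Nat.sInf_le ⟨[], IsPos.root, rfl⟩) (Nat.pos_of_ne_zero hd))⟩

/-- The rigid truncation `g†d` of a partial term graph at finite depth `d`. -/
noncomputable def trunc (g : TermGraph S.bot N) (d : ℕ) :
    TermGraph S.bot (TNode g d) where
  lab := truncLab g d
  suc := truncSuc g d
  root := truncRoot g d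

end TermGraph

/-- A canonical term graph: a term graph whose nodes are sets of positions,
each node being exactly its set of positions, with all nodes reachable. -/
structure CTG (S : Signature) where
  nodes : Set (Set (List ℕ))
  tg : TermGraph S ↥nodes
  reach : tg.Reachable
  canon : ∀ n : ↥nodes, (n : Set (List ℕ)) = tg.nodePos n

namespace CTG

variable {S : Signature}

def pos (g : CTG S) : Set (List ℕ) := g.tg.pos
def Aliases (g : CTG S) : List ℕ → List ℕ → Prop := g.tg.Aliases
def posAcy (g : CTG S) : Set (List ℕ) := g.tg.posAcy
noncomputable def labAt (g : CTG S) : List ℕ → S.Sym := g.tg.labAt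

/-- A canonical partial term graph is total if it has no `⊥`-labelled node. -/
def Total (g : CTG S.bot) : Prop := g.tg.Total

/-- The rigid partial order `g ≤⊥r h`: there is a rigid `⊥`-homomorphism
from `g` to `h`. -/
def LeR (g h : CTG S.bot) : Prop :=
  ∃ φ, TermGraph.IsRigidBotHom g.tg h.tg φ

noncomputable def botDepth (g : CTG S.bot) : ℕ∞ := g.tg.botDepth

/-- `TruncIso g h d`: the rigid truncations of `g` and `h` at depth `d ≤ ω`
are isomorphic (`g†ω = g`). -/
def TruncIso {N M : Type} (g : TermGraph S.bot N) (h : TermGraph S.bot M)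
    (d : ℕ∞) : Prop :=
  (d = ⊤ → TermGraph.Iso g h) ∧
  ∀ k : ℕ, d = (k : ℕ∞) → TermGraph.Iso (g.trunc k) (h.trunc k)

/-- The rigid similarity `sim†(g,h)`: the maximal `d ≤ ω` such that
`g†d ≅ h†d`. -/
noncomputable def simr (g h : CTG S.bot) : ℕ∞ :=
  sSup {d : ℕ∞ | TruncIso g.tg h.tg d}

open Classical in
/-- The rigid distance `d†(g,h) = 2^{-sim†(g,h)}` (with `2^{-ω} = 0`). -/
noncomputable def rdist (g h : CTG S.bot) : ℝ :=
  if simr g h = ⊤ then 0 else (1 / 2 : ℝ) ^ (simr g h).toNat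

def IsUB (A : Set (CTG S.bot)) (u : CTG S.bot) : Prop := ∀ g ∈ A, LeR g u

def IsLubR (A : Set (CTG S.bot)) (u : CTG S.bot) : Prop :=
  IsUB A u ∧ ∀ v, IsUB A v → LeR u v

def IsLB (A : Set (CTG S.bot)) (l : CTG S.bot) : Prop := ∀ g ∈ A, LeR l g

def IsGlbR (A : Set (CTG S.bot)) (l : CTG S.bot) : Prop :=
  IsLB A l ∧ ∀ m, IsLB A m → LeR m l

/-- A directed set: non-empty and every two elements have an upper bound inside. -/
def DirectedR (A : Set (CTG S.bot)) : Prop :=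
  A.Nonempty ∧ ∀ g ∈ A, ∀ h ∈ A, ∃ u ∈ A, LeR g u ∧ LeR h u

/-- `L` is the limit inferior `⨆_{β<α} ⨅_{β≤ι<α} f ι` of the ordinal-indexed
sequence `(f ι)_{ι<α}` in the rigid partial order. -/
def IsLiminfR (α : Ordinal.{0}) (f : Ordinal.{0} → CTG S.bot) (L : CTG S.bot) : Prop :=
  ∃ inf : Ordinal.{0} → CTG S.bot,
    (∀ β < α, IsGlbR {g | ∃ ι, β ≤ ι ∧ ι < α ∧ g = f ι} (inf β)) ∧
    IsLubR {g | ∃ β < α, g = inf β} L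

/-- Cauchy condition for an ordinal-indexed sequence w.r.t. the rigid distance. -/
def OrdCauchy (α : Ordinal.{0}) (f : Ordinal.{0} → CTG S.bot) : Prop :=
  ∀ ε : ℝ, 0 < ε → ∃ β < α, ∀ ι ι' : Ordinal.{0},
    β < ι → ι < ι' → ι' < α → rdist (f ι) (f ι') < ε

/-- Convergence of an ordinal-indexed sequence to `g` w.r.t. the rigid distance. -/
def OrdTendsto (α : Ordinal.{0}) (f : Ordinal.{0} → CTG S.bot) (g : CTG S.bot) : Prop :=
  ∀ ε : ℝ, 0 < ε → ∃ β < α, ∀ ι : Ordinal.{0}, β < ι → ι < α → rdist (f ι) g < ε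

/-- `u` is the unravelling of `g`: the term tree with the same positions and
labels as `g` and trivial aliasing. -/
def IsUnravelling (g u : CTG S) : Prop :=
  u.pos = g.pos ∧ (∀ π ∈ g.pos, u.labAt π = g.labAt π) ∧
  (∀ π π' : List ℕ, u.Aliases π π' ↔ (π ∈ g.pos ∧ π = π'))

end CTG

/-- A labelled quotient tree over a signature `S`. -/
structure LQT (S : Signature) where
  P : Set (List ℕ)
  nonempty : P.Nonempty
  l : List ℕ → S.Sym
  rel : List ℕ → List ℕ → Prop
  rel_refl : ∀ π ∈ P, rel π π
  rel_symm : ∀ π π' : List ℕ, rel π π' → rel π' π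
  rel_trans : ∀ π π' π'' : List ℕ, rel π π' → rel π' π'' → rel π π''
  rel_mem : ∀ π π' : List ℕ, rel π π' → π ∈ P ∧ π' ∈ P
  reach_mem : ∀ (π : List ℕ) (i : ℕ), π ++ [i] ∈ P → π ∈ P
  reach_ar : ∀ (π : List ℕ) (i : ℕ), π ++ [i] ∈ P → i < S.ar (l π)
  congr_lab : ∀ π π' : List ℕ, rel π π' → l π = l π'
  congr_suc : ∀ (π π' : List ℕ) (i : ℕ), rel π π' → i < S.ar (l π) →
    rel (π ++ [i]) (π' ++ [i])

end TGR
attribute [reducible] TGR.TermGraph.TNode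
namespace TGR
namespace TermGraph

variable {S : Signature} {N M K : Type}

/-- Snoc inversion for positions. -/
theorem isPos_snoc_iff {g : TermGraph S N} {π : List ℕ} {i : ℕ} {n : N} :
    g.IsPos (π ++ [i]) n ↔
      ∃ m, ∃ _ : g.IsPos π m, ∃ hi : i < S.ar (g.lab m), n = g.suc m ⟨i, hi⟩ := by
  constructor
  · intro h
    generalize hπ : π ++ [i] = σ at h
    cases h with
    | root => simp at hπ
    | @step π₀ n₀ h₀ i₀ =>
      obtain ⟨rfl, h2⟩ := List.append_inj' hπ rfl
      obtain rfl : i = (i₀ : ℕ) := by simpa using h2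
      exact ⟨n₀, h₀, i₀.isLt, rfl⟩
  · rintro ⟨m, hm, hi, rfl⟩
    exact hm.step ⟨i, hi⟩

theorem isPos_nil_iff {g : TermGraph S N} {n : N} : g.IsPos [] n ↔ n = g.root := by
  constructor
  · intro h
    generalize hπ : ([] : List ℕ) = σ at h
    cases h with
    | root => rfl
    | step h i => simp at hπ
  · rintro rfl; exact .root

/-- Positions are functional: a position determines the node. -/
theorem isPos_unique {g : TermGraph S N} {π : List ℕ} {n n' : N}
    (h : g.IsPos π n) (h' : g.IsPos π n') : n = n' := by
  induction π using List.reverseRecOn generalizing n n' with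
  | nil => rw [isPos_nil_iff.mp h, isPos_nil_iff.mp h']
  | append_singleton π i ih =>
    obtain ⟨m, hm, hi, rfl⟩ := isPos_snoc_iff.mp h
    obtain ⟨m', hm', hi', rfl⟩ := isPos_snoc_iff.mp h'
    obtain rfl : m = m' := ih hm hm'
    rfl

/-- Prefixes of positions are positions. -/
theorem isPos_prefix {g : TermGraph S N} {π σ : List ℕ} {n : N}
    (h : g.IsPos π n) (hp : σ <+: π) : ∃ m, g.IsPos σ m := by
  induction π using List.reverseRecOn generalizing n with
  | nil => exact ⟨n, (List.prefix_nil.mp hp) ▸ h⟩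
  | append_singleton π i ih =>
    rcases List.prefix_concat_iff.mp hp with rfl | hp'
    · exact ⟨n, h⟩
    · obtain ⟨m, hm, hi, rfl⟩ := isPos_snoc_iff.mp h
      exact ih hm hp'

/-- Transplanting a path continuation between two positions of the same node. -/
theorem isPos_transplant {g : TermGraph S N} {π₁ π₂ ρ : List ℕ} {m n : N}
    (h1 : g.IsPos π₁ m) (h2 : g.IsPos π₂ m) (h : g.IsPos (π₂ ++ ρ) n) :
    g.IsPos (π₁ ++ ρ) n := by
  induction ρ using List.reverseRecOn generalizing n with
  | nil =>
    simp only [List.append_nil] at h ⊢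
    rwa [isPos_unique h h2]
  | append_singleton ρ i ih =>
    rw [← List.append_assoc] at h
    obtain ⟨m', hm', hi, rfl⟩ := isPos_snoc_iff.mp h
    rw [← List.append_assoc]
    exact (ih hm').step ⟨i, hi⟩

theorem depth_le_length {g : TermGraph S N} {π : List ℕ} {n : N} (h : g.IsPos π n) :
    g.depth n ≤ π.length :=
  Nat.sInf_le ⟨π, h, rfl⟩

/-- A prefix of an acyclic position is acyclic. -/
theorem isAcyclicPos_prefix {g : TermGraph S N} {π σ : List ℕ}
    (h : g.IsAcyclicPos π) (hp : σ <+: π) : g.IsAcyclicPos σ :=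
  fun π₁ π₂ n h1 h2 p1 p2 => h π₁ π₂ n h1 (h2.trans hp) p1 p2

/-- Every node with a position has an acyclic position of minimal length. -/
theorem exists_acyclic_pos {g : TermGraph S N} {n : N} {π₀ : List ℕ}
    (h0 : g.IsPos π₀ n) :
    ∃ π, g.IsPos π n ∧ g.IsAcyclicPos π ∧ π.length = g.depth n := by
  have hne : {k : ℕ | ∃ π : List ℕ, g.IsPos π n ∧ π.length = k}.Nonempty :=
    ⟨π₀.length, π₀, h0, rfl⟩
  obtain ⟨π, hπ, hlen⟩ := Nat.sInf_mem hne
  refine ⟨π, hπ, ?_, hlen⟩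
  intro π₁ π₂ m hp12 hp2 h1 h2
  by_contra hne'
  obtain ⟨ρ, rfl⟩ := hp2
  have h' : g.IsPos (π₁ ++ ρ) n := isPos_transplant h1 h2 hπ
  have : g.depth n ≤ (π₁ ++ ρ).length := depth_le_length h'
  have hlt : π₁.length < π₂.length :=
    lt_of_le_of_ne hp12.length_le (fun he => hne' (hp12.eq_of_length he))
  simp only [List.length_append] at this hlen
  have hd : g.depth n = sInf {k : ℕ | ∃ π : List ℕ, g.IsPos π n ∧ π.length = k} := rfl
  omega

end TermGraph
end TGR
namespace TGR
namespace TermGraph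

variable {S : Signature} {N M K : Type}

theorem bot_ar_none : ∀ o : Option S.Sym, o = none → S.bot.ar o = 0 := by
  rintro _ rfl; rfl

theorem lab_ne_none_of_ar_pos {g : TermGraph S.bot N} {n : N}
    (h : 0 < S.bot.ar (g.lab n)) : g.lab n ≠ none := by
  intro he; rw [bot_ar_none _ he] at h; exact Nat.lt_irrefl 0 h

/-- `Δ`-homomorphisms preserve positions provided `Δ`-labels are nullary. -/
theorem IsDHom.isPos_map {Δ : Set S.Sym} {g : TermGraph S N} {h : TermGraph S M}
    {φ : N → M} (hφ : IsDHom Δ g h φ)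
    (hΔ : ∀ n : N, g.lab n ∈ Δ → S.ar (g.lab n) = 0)
    {π : List ℕ} {n : N} (hp : g.IsPos π n) : h.IsPos π (φ n) := by
  induction hp with
  | root => rw [hφ.root_eq]; exact .root
  | @step π n hp i ih =>
    by_cases hmem : g.lab n ∈ Δ
    · exact Fin.elim0 (Fin.cast (hΔ n hmem) i)
    · have hi' : (i : ℕ) < S.ar (h.lab (φ n)) := by
        rw [hφ.lab_eq n hmem]; exact i.isLt
      have := hφ.suc_eq n hmem i i.isLt hi'
      have he : g.suc n ⟨(i : ℕ), i.isLt⟩ = g.suc n i := by simp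
      rw [he] at this
      rw [this]
      exact ih.step ⟨(i : ℕ), hi'⟩

theorem isPos_map_bot {g : TermGraph S.bot N} {h : TermGraph S.bot M}
    {φ : N → M} (hφ : IsRigidBotHom g h φ) {π : List ℕ} {n : N}
    (hp : g.IsPos π n) : h.IsPos π (φ n) :=
  hφ.1.isPos_map (fun n hn => bot_ar_none _ hn) hp

theorem isAcyclicPos_of_map {g : TermGraph S N} {h : TermGraph S M} {φ : N → M}
    (hmap : ∀ (π : List ℕ) (n : N), g.IsPos π n → h.IsPos π (φ n))
    {π : List ℕ} (hac : h.IsAcyclicPos π) : g.IsAcyclicPos π :=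
  fun π₁ π₂ n h1 h2 p1 p2 => hac π₁ π₂ (φ n) h1 h2 (hmap _ _ p1) (hmap _ _ p2)

theorem rigid_nodePosAcy {g : TermGraph S.bot N} {h : TermGraph S.bot M}
    {φ : N → M} (hφ : IsRigidBotHom g h φ) {n : N} (hn : g.lab n ≠ none) :
    g.nodePosAcy n = h.nodePosAcy (φ n) :=
  hφ.2 n (by exact hn)

/-- Rigid `⊥`-homs are injective on non-`⊥` nodes that have positions. -/
theorem rigid_inj {g : TermGraph S.bot N} {h : TermGraph S.bot M}
    {φ : N → M} (hφ : IsRigidBotHom g h φ) {n n' : N}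
    (hn : g.lab n ≠ none) (hn' : g.lab n' ≠ none)
    {π₀ : List ℕ} (hp : g.IsPos π₀ n) (he : φ n = φ n') : n = n' := by
  obtain ⟨π, hπ, hac, -⟩ := exists_acyclic_pos hp
  have h1 : π ∈ g.nodePosAcy n := ⟨hπ, hac⟩
  have h2 : π ∈ g.nodePosAcy n' := by
    rw [rigid_nodePosAcy hφ hn', ← he, ← rigid_nodePosAcy hφ hn]
    exact h1
  exact isPos_unique h1.1 h2.1

/-- Depth is preserved by rigid `⊥`-homs on non-`⊥` nodes. -/
theorem rigid_depth_eq {g : TermGraph S.bot N} {h : TermGraph S.bot M}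
    {φ : N → M} (hφ : IsRigidBotHom g h φ) {n : N}
    (hn : g.lab n ≠ none) {π₀ : List ℕ} (hp : g.IsPos π₀ n) :
    g.depth n = h.depth (φ n) := by
  apply le_antisymm
  · obtain ⟨π, hπ, hac, hlen⟩ := exists_acyclic_pos (isPos_map_bot hφ hp)
    have : π ∈ g.nodePosAcy n := by rw [rigid_nodePosAcy hφ hn]; exact ⟨hπ, hac⟩
    exact hlen ▸ depth_le_length this.1
  · obtain ⟨π, hπ, hac, hlen⟩ := exists_acyclic_pos hp
    have : π ∈ h.nodePosAcy (φ n) := by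
      rw [← rigid_nodePosAcy hφ hn]; exact ⟨hπ, hac⟩
    exact hlen ▸ depth_le_length this.1

/-- Tracing a position of the codomain back in the domain of a `⊥`-hom. -/
theorem trace {g : TermGraph S.bot N} {h : TermGraph S.bot M}
    {φ : N → M} (hφ : IsRigidBotHom g h φ) {π : List ℕ} {n : M}
    (hp : h.IsPos π n) :
    (∃ m : N, g.IsPos π m ∧ φ m = n) ∨
    (∃ (π' : List ℕ) (m : N), π' <+: π ∧ g.IsPos π' m ∧ g.lab m = none) := by
  induction hp with
  | root => exact Or.inl ⟨g.root, .root, hφ.1.root_eq⟩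
  | @step π n hp i ih =>
    rcases ih with ⟨m, hm, rfl⟩ | ⟨π', m, hpre, hm, hbot⟩
    · by_cases hb : g.lab m = none
      · exact Or.inr ⟨π, m, List.prefix_append _ _, hm, hb⟩
      · have hmem : g.lab m ∉ ({none} : Set (Option S.Sym)) := by exact hb
        have hi : (i : ℕ) < S.bot.ar (g.lab m) := by
          rw [← hφ.1.lab_eq m hmem]; exact i.isLt
        refine Or.inl ⟨g.suc m ⟨(i : ℕ), hi⟩, hm.step ⟨(i : ℕ), hi⟩, ?_⟩
        have := hφ.1.suc_eq m hmem i hi i.isLt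
        simpa using this
    · exact Or.inr ⟨π', m, hpre.trans (List.prefix_append _ _), hm, hbot⟩

/-- `⊥`-depth is monotone along rigid `⊥`-homs (for reachable graphs). -/
theorem botDepth_mono {g : TermGraph S.bot N} {h : TermGraph S.bot M}
    {φ : N → M} (hφ : IsRigidBotHom g h φ) (hr : h.Reachable) :
    g.botDepth ≤ h.botDepth := by
  apply le_sInf
  rintro d ⟨n, hbot, rfl⟩
  obtain ⟨π₀, hπ₀⟩ := hr n
  obtain ⟨π, hπ, -, hlen⟩ := exists_acyclic_pos hπ₀
  rcases trace hφ hπ with ⟨m, hm, he⟩ | ⟨π', m, hpre, hm, hb⟩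
  · have hb : g.lab m = none := by
      by_contra hb
      have hmem : g.lab m ∉ ({none} : Set (Option S.Sym)) := by exact hb
      rw [← he, hφ.1.lab_eq m hmem] at hbot
      exact hb hbot
    calc g.botDepth ≤ (g.depth m : ℕ∞) := sInf_le ⟨m, hb, rfl⟩
      _ ≤ (h.depth n : ℕ∞) := by
          exact_mod_cast hlen ▸ depth_le_length hm
  · calc g.botDepth ≤ (g.depth m : ℕ∞) := sInf_le ⟨m, hb, rfl⟩
      _ ≤ (h.depth n : ℕ∞) := by
          have h1 : g.depth m ≤ π'.length := depth_le_length hm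
          have h2 : π'.length ≤ π.length := hpre.length_le
          exact_mod_cast hlen ▸ h1.trans h2

end TermGraph
end TGR
namespace TGR
namespace TermGraph

variable {S : Signature} {N M K : Type}

theorem suc_congr (g : TermGraph S N) {m m' : N} (h : m = m') {i : ℕ}
    (hi : i < S.ar (g.lab m)) (hi' : i < S.ar (g.lab m')) :
    g.suc m ⟨i, hi⟩ = g.suc m' ⟨i, hi'⟩ := by subst h; rfl

theorem IsDHom.mono {Δ₁ Δ₂ : Set S.Sym} (hsub : Δ₁ ⊆ Δ₂)
    {g : TermGraph S N} {h : TermGraph S M} {φ : N → M}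
    (hφ : IsDHom Δ₁ g h φ) : IsDHom Δ₂ g h φ where
  root_eq := hφ.root_eq
  lab_eq n hn := hφ.lab_eq n (fun hmem => hn (hsub hmem))
  suc_eq n hn := hφ.suc_eq n (fun hmem => hn (hsub hmem))

theorem IsDHom.comp {Δ : Set S.Sym} {g : TermGraph S N} {h : TermGraph S M}
    {k : TermGraph S K} {φ : N → M} {ψ : M → K}
    (hφ : IsDHom Δ g h φ) (hψ : IsDHom Δ h k ψ) :
    IsDHom Δ g k (fun n => ψ (φ n)) where
  root_eq := by rw [hφ.root_eq, hψ.root_eq]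
  lab_eq n hn := by
    rw [hψ.lab_eq (φ n) (by rw [hφ.lab_eq n hn]; exact hn), hφ.lab_eq n hn]
  suc_eq n hn i hi hi' := by
    have hlab := hφ.lab_eq n hn
    have hi₂ : i < S.ar (h.lab (φ n)) := by rw [hlab]; exact hi
    have hn₂ : h.lab (φ n) ∉ Δ := by rw [hlab]; exact hn
    rw [hφ.suc_eq n hn i hi hi₂, hψ.suc_eq (φ n) hn₂ i hi₂ hi']

theorem IsRigidDHom.comp {Δ : Set S.Sym} {g : TermGraph S N} {h : TermGraph S M}
    {k : TermGraph S K} {φ : N → M} {ψ : M → K}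
    (hφ : IsRigidDHom Δ g h φ) (hψ : IsRigidDHom Δ h k ψ) :
    IsRigidDHom Δ g k (fun n => ψ (φ n)) := by
  refine ⟨hφ.1.comp hψ.1, fun n hn => ?_⟩
  rw [hφ.2 n hn, hψ.2 (φ n) (by rw [hφ.1.lab_eq n hn]; exact hn)]

/-- The inverse of a bijective `∅`-homomorphism is an `∅`-homomorphism. -/
theorem IsDHom.inv {g : TermGraph S N} {h : TermGraph S M} {φ : N → M} {ψ : M → N}
    (hφ : IsDHom ∅ g h φ) (h1 : ∀ n, ψ (φ n) = n) (h2 : ∀ m, φ (ψ m) = m) :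
    IsDHom ∅ h g ψ where
  root_eq := by rw [← hφ.root_eq, h1]
  lab_eq m _ := by
    have := hφ.lab_eq (ψ m) (Set.notMem_empty _)
    rw [h2] at this
    exact this.symm
  suc_eq m _ i hi hi' := by
    have hi₂ : i < S.ar (h.lab (φ (ψ m))) := by rw [h2]; exact hi
    have e := hφ.suc_eq (ψ m) (Set.notMem_empty _) i hi' hi₂
    have e2 : h.suc (φ (ψ m)) ⟨i, hi₂⟩ = h.suc m ⟨i, hi⟩ := suc_congr h (h2 m) hi₂ hi
    rw [← e2, ← e, h1]

theorem Iso.refl (g : TermGraph S N) : Iso g g := by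
  refine ⟨id, id, ?_, ?_, fun _ => rfl, fun _ => rfl⟩ <;>
    exact ⟨rfl, fun _ _ => rfl, fun n _ i hi hi' => rfl⟩

theorem Iso.symm {g : TermGraph S N} {h : TermGraph S M} (e : Iso g h) : Iso h g := by
  obtain ⟨φ, ψ, hφ, hψ, h1, h2⟩ := e
  exact ⟨ψ, φ, hψ, hφ, h2, h1⟩

theorem Iso.trans {g : TermGraph S N} {h : TermGraph S M} {k : TermGraph S K}
    (e : Iso g h) (e' : Iso h k) : Iso g k := by
  obtain ⟨φ, ψ, hφ, hψ, h1, h2⟩ := e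
  obtain ⟨φ', ψ', hφ', hψ', h1', h2'⟩ := e'
  exact ⟨fun n => φ' (φ n), fun m => ψ (ψ' m), hφ.comp hφ', hψ'.comp hψ,
    fun n => by simp only []; rw [h1', h1], fun m => by simp only []; rw [h2, h2']⟩

theorem IsDHom.isPos_map' {g : TermGraph S N} {h : TermGraph S M} {φ : N → M}
    (hφ : IsDHom ∅ g h φ) {π : List ℕ} {n : N} (hp : g.IsPos π n) :
    h.IsPos π (φ n) :=
  hφ.isPos_map (fun n hn => absurd hn (Set.notMem_empty _)) hp

section IsoFacts

variable {g : TermGraph S N} {h : TermGraph S M} {φ : N → M} {ψ : M → N}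
  (hφ : IsDHom ∅ g h φ) (hψ : IsDHom ∅ h g ψ)
  (h1 : ∀ n, ψ (φ n) = n) (h2 : ∀ m, φ (ψ m) = m)

include hφ hψ h1 h2

theorem iso_isPos_iff {π : List ℕ} {n : N} : g.IsPos π n ↔ h.IsPos π (φ n) := by
  refine ⟨hφ.isPos_map', fun hp => ?_⟩
  have := hψ.isPos_map' hp
  rwa [h1] at this

theorem iso_nodePosAcy_eq (n : N) : g.nodePosAcy n = h.nodePosAcy (φ n) := by
  ext π
  constructor
  · rintro ⟨hp, hac⟩
    exact ⟨hφ.isPos_map' hp, isAcyclicPos_of_map (fun _ _ => hψ.isPos_map') hac⟩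
  · rintro ⟨hp, hac⟩
    refine ⟨(iso_isPos_iff hφ hψ h1 h2).mpr hp,
      isAcyclicPos_of_map (fun _ _ => hφ.isPos_map') hac⟩

theorem iso_depth_eq (n : N) : g.depth n = h.depth (φ n) := by
  unfold depth
  congr 1
  ext d
  constructor
  · rintro ⟨π, hp, rfl⟩; exact ⟨π, hφ.isPos_map' hp, rfl⟩
  · rintro ⟨π, hp, rfl⟩; exact ⟨π, (iso_isPos_iff hφ hψ h1 h2).mpr hp, rfl⟩

end IsoFacts

/-- An isomorphism of partial term graphs is a rigid `⊥`-homomorphism. -/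
theorem Iso.isRigidBotHom {g : TermGraph S.bot N} {h : TermGraph S.bot M}
    (e : Iso g h) : ∃ φ, IsRigidBotHom g h φ := by
  obtain ⟨φ, ψ, hφ, hψ, h1, h2⟩ := e
  exact ⟨φ, hφ.mono (Set.empty_subset _),
    fun n _ => iso_nodePosAcy_eq hφ hψ h1 h2 n⟩

theorem Iso.botDepth_eq {g : TermGraph S.bot N} {h : TermGraph S.bot M}
    (e : Iso g h) : g.botDepth = h.botDepth := by
  obtain ⟨φ, ψ, hφ, hψ, h1, h2⟩ := e
  unfold botDepth
  congr 1
  ext d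
  constructor
  · rintro ⟨n, hb, rfl⟩
    exact ⟨φ n, by rw [hφ.lab_eq n (Set.notMem_empty _), hb],
      by rw [← iso_depth_eq hφ hψ h1 h2 n]⟩
  · rintro ⟨m, hb, rfl⟩
    refine ⟨ψ m, by rw [hψ.lab_eq m (Set.notMem_empty _), hb], ?_⟩
    rw [iso_depth_eq hφ hψ h1 h2 (ψ m), h2]

end TermGraph
end TGR
namespace TGR
namespace TermGraph

variable {S : Signature} {N : Type}

theorem nodePos_inj {t : TermGraph S N} (hr : t.Reachable) {n n' : N}
    (h : t.nodePos n = t.nodePos n') : n = n' := by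
  obtain ⟨π, hπ⟩ := hr n
  have hπ' : t.IsPos π n' := by
    have : π ∈ t.nodePos n' := h ▸ hπ
    exact this
  exact isPos_unique hπ hπ'

noncomputable def canonWit (t : TermGraph S N) (x : ↥(Set.range t.nodePos)) : N :=
  (Set.mem_range.mp x.2).choose

theorem canonWit_spec (t : TermGraph S N) (x : ↥(Set.range t.nodePos)) :
    t.nodePos (t.canonWit x) = (x : Set (List ℕ)) :=
  (Set.mem_range.mp x.2).choose_spec

noncomputable def canonTG (t : TermGraph S N) : TermGraph S ↥(Set.range t.nodePos) where
  lab x := t.lab (t.canonWit x)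
  suc x i := ⟨t.nodePos (t.suc (t.canonWit x) i), Set.mem_range_self _⟩
  root := ⟨t.nodePos t.root, Set.mem_range_self _⟩

noncomputable def canonMap (t : TermGraph S N) (n : N) : ↥(Set.range t.nodePos) :=
  ⟨t.nodePos n, Set.mem_range_self _⟩

theorem canonWit_canonMap {t : TermGraph S N} (hr : t.Reachable) (n : N) :
    t.canonWit (t.canonMap n) = n :=
  nodePos_inj hr (canonWit_spec t (t.canonMap n))

theorem canonMap_canonWit (t : TermGraph S N) (x : ↥(Set.range t.nodePos)) :
    t.canonMap (t.canonWit x) = x :=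
  Subtype.ext (canonWit_spec t x)

theorem canonMap_isDHom {t : TermGraph S N} (hr : t.Reachable) :
    IsDHom ∅ t t.canonTG t.canonMap where
  root_eq := rfl
  lab_eq n _ := by
    show t.lab (t.canonWit (t.canonMap n)) = t.lab n
    rw [canonWit_canonMap hr]
  suc_eq n _ i hi hi' := by
    apply Subtype.ext
    show t.nodePos (t.suc n ⟨i, hi⟩) =
      t.nodePos (t.suc (t.canonWit (t.canonMap n)) ⟨i, hi'⟩)
    exact congrArg t.nodePos (suc_congr t (canonWit_canonMap hr n).symm hi hi')

theorem iso_canonTG {t : TermGraph S N} (hr : t.Reachable) : Iso t t.canonTG :=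
  ⟨t.canonMap, t.canonWit, canonMap_isDHom hr,
    (canonMap_isDHom hr).inv (canonWit_canonMap hr) (canonMap_canonWit t),
    canonWit_canonMap hr, canonMap_canonWit t⟩

/-- Every reachable term graph is isomorphic to a canonical term graph. -/
theorem exists_canonical (t : TermGraph S N) (hr : t.Reachable) :
    ∃ c : CTG S, Iso c.tg t := by
  refine ⟨⟨Set.range t.nodePos, t.canonTG, ?_, ?_⟩, (iso_canonTG hr).symm⟩
  · intro x
    obtain ⟨π, hπ⟩ := hr (t.canonWit x)
    refine ⟨π, ?_⟩
    have := (canonMap_isDHom hr).isPos_map' hπ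
    rwa [canonMap_canonWit] at this
  · intro x
    have : (x : Set (List ℕ)) = t.nodePos (t.canonWit x) := (canonWit_spec t x).symm
    rw [this]
    ext π
    constructor
    · intro hp
      have := (canonMap_isDHom hr).isPos_map' hp
      rw [canonMap_canonWit] at this
      exact this
    · intro hp
      have hψ' := ((canonMap_isDHom hr).inv (canonWit_canonMap hr)
        (canonMap_canonWit t)).isPos_map' (n := x) hp
      exact hψ'

end TermGraph
end TGR
namespace TGR
namespace TermGraph

variable {S : Signature} {N : Type}

/-- The natural map from the truncation back to the graph. -/
noncomputable def truncMap (g : TermGraph S.bot N) (d : ℕ) (x : TNode g d) : N :=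
  Sum.elim id (fun p => if h : p.2 < S.bot.ar (g.lab p.1) then g.suc p.1 ⟨p.2, h⟩
    else g.root) x.1

theorem truncRoot_val {g : TermGraph S.bot N} {d : ℕ} (hd : d ≠ 0) :
    (truncRoot g d).1 = Sum.inl g.root := by
  unfold truncRoot
  rw [dif_neg hd]

theorem truncLab_inl {g : TermGraph S.bot N} {d : ℕ} (x : TNode g d) {n : N}
    (hx : x.1 = Sum.inl n) : (g.trunc d).lab x = g.lab n := by
  show truncLab g d x = g.lab n
  unfold truncLab
  rw [hx]
  rfl

theorem tnode_inl_of_lab_ne {g : TermGraph S.bot N} {d : ℕ} (x : TNode g d)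
    (hx : (g.trunc d).lab x ≠ none) : ∃ n, x.1 = Sum.inl n := by
  obtain ⟨x1 | p, hp⟩ := x
  · exact ⟨x1, rfl⟩
  · exact absurd rfl hx

theorem truncMap_isDHom (g : TermGraph S.bot N) {d : ℕ} (hd : d ≠ 0) :
    IsDHom ({none} : Set S.bot.Sym) (g.trunc d) g (truncMap g d) where
  root_eq := by
    show truncMap g d (truncRoot g d) = g.root
    unfold truncMap
    rw [truncRoot_val hd]
    rfl
  lab_eq x hx := by
    obtain ⟨n, hn⟩ := tnode_inl_of_lab_ne x (by exact hx)
    rw [truncLab_inl x hn]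
    unfold truncMap
    rw [hn]
    rfl
  suc_eq x hx i hi hi' := by
    obtain ⟨n, hn⟩ := tnode_inl_of_lab_ne x (by exact hx)
    obtain ⟨x1, hp⟩ := x
    simp only at hn
    subst hn
    have hig : i < S.bot.ar (g.lab n) := by
      rwa [truncLab_inl ⟨Sum.inl n, hp⟩ rfl] at hi
    show truncMap g d (truncSuc g d ⟨Sum.inl n, hp⟩ ⟨i, hi⟩) = g.suc (truncMap g d ⟨Sum.inl n, hp⟩) ⟨i, hi'⟩
    by_cases hf : g.IsFringe d (n, i)
    · simp only [truncSuc, hf, dif_pos]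
      unfold truncMap
      simp only [Sum.elim_inr]
      rw [dif_pos hig]
      exact suc_congr g rfl _ _
    · simp only [truncSuc, hf, dif_neg, not_false_iff]
      unfold truncMap
      simp only [Sum.elim_inl, id]
end TermGraph
end TGR
namespace TGR
namespace TermGraph

variable {S : Signature} {N : Type}

theorem truncMap_inl {g : TermGraph S.bot N} {d : ℕ} (x : TNode g d) {n : N}
    (hx : x.1 = Sum.inl n) : truncMap g d x = n := by
  unfold truncMap; rw [hx]; rfl

theorem trunc_isPos_map {g : TermGraph S.bot N} {d : ℕ} (hd : d ≠ 0)
    {π : List ℕ} {x : TNode g d} (hp : (g.trunc d).IsPos π x) :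
    g.IsPos π (truncMap g d x) :=
  (truncMap_isDHom g hd).isPos_map (fun _ hx => bot_ar_none _ hx) hp

theorem ar_pos_of_proper_prefix {S' : Signature} {N' : Type} {t : TermGraph S' N'}
    {π σ : List ℕ} {n m : N'} (hp : t.IsPos π n) (hpre : σ <+: π) (hne : σ ≠ π)
    (hσ : t.IsPos σ m) : 0 < S'.ar (t.lab m) := by
  obtain ⟨ρ, rfl⟩ := hpre
  rcases ρ with - | ⟨c, cs⟩
  · exact absurd (by simp) hne
  · have hpre2 : σ ++ [c] <+: σ ++ c :: cs := by
      refine ⟨cs, by simp⟩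
    obtain ⟨m', hm'⟩ := isPos_prefix hp hpre2
    obtain ⟨m'', hm'', hi, -⟩ := isPos_snoc_iff.mp hm'
    obtain rfl : m'' = m := isPos_unique hm'' hσ
    exact Nat.lt_of_le_of_lt (Nat.zero_le _) hi

theorem trunc_acyclic_to_g {g : TermGraph S.bot N} {d : ℕ} (hd : d ≠ 0)
    {π : List ℕ} {n : N} {hn : Sum.elim (g.Retained d) (g.IsFringe d) (Sum.inl n)}
    (hp : (g.trunc d).IsPos π (⟨Sum.inl n, hn⟩ : TNode g d))
    (hac : (g.trunc d).IsAcyclicPos π) : g.IsAcyclicPos π := by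
  intro π₁ π₂ w hp12 hp2 h1 h2
  obtain ⟨x₁, hx₁⟩ := isPos_prefix hp (hp12.trans hp2)
  obtain ⟨x₂, hx₂⟩ := isPos_prefix hp hp2
  have key : ∀ (σ : List ℕ) (y : TNode g d), (g.trunc d).IsPos σ y → σ <+: π →
      g.IsPos σ w → y.1 = Sum.inl w := by
    intro σ y hy hpre hw
    by_cases he : σ = π
    · subst he
      obtain rfl : y = ⟨Sum.inl n, hn⟩ := isPos_unique hy hp
      have hmap := trunc_isPos_map hd hy
      rw [truncMap_inl _ rfl] at hmap
      show Sum.inl n = Sum.inl w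
      exact congrArg _ (isPos_unique hmap hw)
    · have har := ar_pos_of_proper_prefix hp hpre he hy
      obtain ⟨m, hm⟩ := tnode_inl_of_lab_ne y (lab_ne_none_of_ar_pos har)
      have hmap := trunc_isPos_map hd hy
      rw [truncMap_inl y hm] at hmap
      rw [hm, isPos_unique hmap hw]
  have e1 := key π₁ x₁ hx₁ (hp12.trans hp2) h1
  have e2 := key π₂ x₂ hx₂ hp2 h2
  have hxe : x₂ = x₁ := Subtype.ext (by rw [e1, e2])
  rw [hxe] at hx₂
  exact hac π₁ π₂ x₁ hp12 hp2 hx₁ hx₂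

theorem trunc_isPos_of_retained {g : TermGraph S.bot N} {d : ℕ} (hd : d ≠ 0)
    {π : List ℕ} {n : N} (hπ : g.IsPos π n) (hac : g.IsAcyclicPos π)
    (hn : g.Retained d n) :
    (g.trunc d).IsPos π (⟨Sum.inl n, hn⟩ : TNode g d) := by
  induction π using List.reverseRecOn generalizing n with
  | nil =>
    obtain rfl : n = g.root := isPos_nil_iff.mp hπ
    have hroot : (g.trunc d).root = (⟨Sum.inl g.root, hn⟩ : TNode g d) :=
      Subtype.ext (truncRoot_val hd)
    rw [← hroot]
    exact .root
  | append_singleton π i ih =>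
    obtain ⟨m, hm, hi, rfl⟩ := isPos_snoc_iff.mp hπ
    have hacπ : g.IsAcyclicPos π := isAcyclicPos_prefix hac ⟨[i], rfl⟩
    have hpos : g.IsPos (π ++ [i]) (g.suc m ⟨i, hi⟩) := hm.step ⟨i, hi⟩
    have hmret : g.Retained d m := hn.pred ⟨π, i, ⟨hpos, hac⟩, hm⟩
    have hstep := ih hm hacπ hmret
    have hnf : ¬ g.IsFringe d (m, i) := by
      intro hf
      unfold IsFringe at hf
      rw [if_neg hd] at hf
      obtain ⟨-, h', hdisj⟩ := hf
      rcases hdisj with hnr | ⟨-, hnp⟩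
      · exact hnr hn
      · exact hnp ⟨π, i, ⟨hpos, hac⟩, hm⟩
    have hi' : (i : ℕ) < S.bot.ar ((g.trunc d).lab ⟨Sum.inl m, hmret⟩) := by
      rw [truncLab_inl _ rfl]; exact hi
    have hfin := hstep.step ⟨i, hi'⟩
    have hsuc : (g.trunc d).suc ⟨Sum.inl m, hmret⟩ ⟨i, hi'⟩ =
        (⟨Sum.inl (g.suc m ⟨i, hi⟩), hn⟩ : TNode g d) := by
      show truncSuc g d ⟨Sum.inl m, hmret⟩ ⟨i, hi'⟩ = ⟨Sum.inl (g.suc m ⟨i, hi⟩), hn⟩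
      simp only [truncSuc, hnf, dif_neg, not_false_iff]
    rw [hsuc] at hfin
    exact hfin

theorem trunc_reachable {g : TermGraph S.bot N} (hr : g.Reachable) (d : ℕ) :
    (g.trunc d).Reachable := by
  by_cases hd : d = 0
  · subst hd
    intro x
    refine ⟨[], ?_⟩
    have hx : x = (g.trunc 0).root := by
      apply Subtype.ext
      obtain ⟨x1 | p, hp⟩ := x
      · exact absurd hp (not_retained_zero _)
      · have hpe : p = (g.root, 0) := by simpa [IsFringe] using hp
        show Sum.inr p = (truncRoot g 0).1
        unfold truncRoot
        rw [dif_pos rfl, hpe]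
    rw [hx]
    exact .root
  · intro x
    obtain ⟨x1 | p, hp⟩ := x
    · obtain ⟨π₀, hπ₀⟩ := hr x1
      obtain ⟨π, hπ, hac, -⟩ := exists_acyclic_pos hπ₀
      exact ⟨π, trunc_isPos_of_retained hd hπ hac hp⟩
    · have hp' : g.IsFringe d p := hp
      have hp'' := hp'
      unfold IsFringe at hp''
      rw [if_neg hd] at hp''
      obtain ⟨hret, hlt, -⟩ := hp''
      obtain ⟨π₀, hπ₀⟩ := hr p.1
      obtain ⟨π, hπ, hac, -⟩ := exists_acyclic_pos hπ₀
      have hbase := trunc_isPos_of_retained hd hπ hac hret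
      have hi' : p.2 < S.bot.ar ((g.trunc d).lab ⟨Sum.inl p.1, hret⟩) := by
        rw [truncLab_inl _ rfl]; exact hlt
      have hfin := hbase.step ⟨p.2, hi'⟩
      have hf : g.IsFringe d (p.1, p.2) := by rwa [Prod.mk.eta]
      have hsuc : (g.trunc d).suc ⟨Sum.inl p.1, hret⟩ ⟨p.2, hi'⟩ =
          (⟨Sum.inr p, hp⟩ : TNode g d) := by
        show truncSuc g d ⟨Sum.inl p.1, hret⟩ ⟨p.2, hi'⟩ = ⟨Sum.inr p, hp⟩
        simp only [truncSuc, hf, dif_pos]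
      rw [hsuc] at hfin
      exact ⟨π ++ [p.2], hfin⟩

theorem le_botDepth_trunc {g : TermGraph S.bot N} (hr : g.Reachable)
    (htot : g.Total) (d : ℕ) : (d : ℕ∞) ≤ (g.trunc d).botDepth := by
  by_cases hd : d = 0
  · subst hd; simp
  · apply le_sInf
    rintro e ⟨x, hlab, rfl⟩
    obtain ⟨x1 | p, hp⟩ := x
    · have : g.lab x1 = none := by rwa [truncLab_inl _ rfl] at hlab
      exact absurd this (htot x1)
    · rw [Nat.cast_le]
      obtain ⟨π₀, hπ₀⟩ := trunc_reachable hr d ⟨Sum.inr p, hp⟩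
      unfold depth
      refine le_csInf ⟨π₀.length, ⟨π₀, hπ₀, rfl⟩⟩ ?_
      rintro e ⟨π, hπ, rfl⟩
      rcases List.eq_nil_or_concat π with rfl | ⟨σ, j, rfl⟩
      · have hre : (⟨Sum.inr p, hp⟩ : TNode g d) = (g.trunc d).root :=
          isPos_nil_iff.mp hπ
        have hval := (congrArg Subtype.val hre).trans (truncRoot_val hd)
        simp at hval
      · rw [List.concat_eq_append] at hπ
        obtain ⟨y, hy, hj, he⟩ := isPos_snoc_iff.mp hπ
        obtain ⟨y1 | q, hq⟩ := y
        swap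
        · have hz : (g.trunc d).lab ⟨Sum.inr q, hq⟩ = none := rfl
          rw [hz] at hj
          exact absurd hj (by simp [Signature.bot])
        · have hjg : j < S.bot.ar (g.lab y1) := by
            rwa [truncLab_inl _ rfl] at hj
          have hσ : g.IsPos σ y1 := by
            have := trunc_isPos_map hd hy
            rwa [truncMap_inl _ rfl] at this
          by_cases hf : g.IsFringe d (y1, j)
          · have hsuc : (g.trunc d).suc ⟨Sum.inl y1, hq⟩ ⟨j, hj⟩ =
                (⟨Sum.inr (y1, j), hf⟩ : TNode g d) := by
              show truncSuc g d ⟨Sum.inl y1, hq⟩ ⟨j, hj⟩ = ⟨Sum.inr (y1, j), hf⟩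
              simp only [truncSuc, hf, dif_pos]
            rw [hsuc] at he
            have hf' := hf
            unfold IsFringe at hf'
            rw [if_neg hd] at hf'
            obtain ⟨-, h', hdisj⟩ := hf'
            rcases hdisj with hnr | ⟨hdep, -⟩
            · have hnotsh : ¬ g.depth (g.suc y1 ⟨j, h'⟩) < d :=
                fun hlt => hnr (.shallow hlt)
              have hle : g.depth (g.suc y1 ⟨j, h'⟩) ≤ σ.length + 1 := by
                have := depth_le_length (hσ.step ⟨j, h'⟩)
                simpa using this
              simp only [List.concat_eq_append, List.length_append,
                List.length_cons, List.length_nil]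
              omega
            · have hdep' : d - 1 ≤ g.depth y1 := hdep
              have := depth_le_length hσ
              simp only [List.concat_eq_append, List.length_append,
                List.length_cons, List.length_nil]
              omega
          · have hv : ((g.trunc d).suc ⟨Sum.inl y1, hq⟩ ⟨j, hj⟩).1 =
                Sum.inl (g.suc y1 ⟨j, hjg⟩) := by
              show (truncSuc g d ⟨Sum.inl y1, hq⟩ ⟨j, hj⟩).1 = Sum.inl (g.suc y1 ⟨j, hjg⟩)
              simp only [truncSuc, hf, dif_neg, not_false_iff]
            rw [← he] at hv
            simp at hv

end TermGraph
end TGR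
namespace TGR
namespace TermGraph

variable {S : Signature} {N M : Type}

/-- The truncation map is a rigid `⊥`-homomorphism. -/
theorem truncMap_isRigidBotHom (g : TermGraph S.bot N) {d : ℕ} (hd : d ≠ 0) :
    IsRigidBotHom (g.trunc d) g (truncMap g d) := by
  refine ⟨truncMap_isDHom g hd, fun x hx => ?_⟩
  obtain ⟨n, hn⟩ := tnode_inl_of_lab_ne x (by exact hx)
  obtain ⟨x1, hp⟩ := x
  simp only at hn
  subst hn
  rw [truncMap_inl _ rfl]
  ext π
  constructor
  · rintro ⟨hp', hac⟩
    refine ⟨?_, trunc_acyclic_to_g hd hp' hac⟩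
    have := trunc_isPos_map hd hp'
    rwa [truncMap_inl _ rfl] at this
  · rintro ⟨hp', hac⟩
    exact ⟨trunc_isPos_of_retained hd hp' hac hp,
      isAcyclicPos_of_map (fun _ _ h => by
        have := trunc_isPos_map hd h; exact this) hac⟩

theorem isRigidBotHom_id (g : TermGraph S.bot N) : IsRigidBotHom g g id :=
  ⟨⟨rfl, fun _ _ => rfl, fun _ _ _ _ _ => rfl⟩, fun _ _ => rfl⟩

theorem botDepth_eq_top_iff {g : TermGraph S.bot N} : g.botDepth = ⊤ ↔ g.Total := by
  constructor
  · intro htop n hlab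
    have : g.botDepth ≤ (g.depth n : ℕ∞) := sInf_le ⟨n, hlab, rfl⟩
    rw [htop] at this
    exact absurd (top_le_iff.mp this) (by simp)
  · intro htot
    unfold botDepth
    rw [show {d : ℕ∞ | ∃ n, g.lab n = none ∧ (g.depth n : ℕ∞) = d} = ∅ from ?_,
      sInf_empty]
    ext d
    simp only [Set.mem_setOf_eq, Set.mem_empty_iff_false, iff_false, not_exists]
    exact fun n hn => absurd hn.1 (htot n)

/-- A rigid `⊥`-homomorphism from a total reachable graph is an isomorphism. -/
theorem iso_of_total_rigid {k : TermGraph S.bot N} {g : TermGraph S.bot M}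
    {φ : N → M} (hφ : IsRigidBotHom k g φ) (hkr : k.Reachable) (hgr : g.Reachable)
    (htot : k.Total) : Iso k g := by
  have hsurj : ∀ m : M, ∃ n : N, φ n = m := by
    intro m
    obtain ⟨π, hπ⟩ := hgr m
    rcases trace hφ hπ with ⟨n, hn, he⟩ | ⟨π', m', -, -, hb⟩
    · exact ⟨n, he⟩
    · exact absurd hb (htot m')
  classical
  set ψ : M → N := fun m => (hsurj m).choose with hψ
  have h2 : ∀ m, φ (ψ m) = m := fun m => (hsurj m).choose_spec
  have h1 : ∀ n, ψ (φ n) = n := by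
    intro n
    obtain ⟨π, hπ⟩ := hkr (ψ (φ n))
    exact rigid_inj hφ (htot _) (htot _) hπ (h2 (φ n))
  have hhom : IsDHom ∅ k g φ :=
    ⟨hφ.1.root_eq, fun n _ => hφ.1.lab_eq n (by exact htot n),
      fun n _ => hφ.1.suc_eq n (by exact htot n)⟩
  exact ⟨φ, ψ, hhom, hhom.inv h1 h2, h1, h2⟩

theorem tnode_zero_eq_root {g : TermGraph S.bot N} (x : TNode g 0) :
    x = (g.trunc 0).root := by
  apply Subtype.ext
  obtain ⟨x1 | p, hp⟩ := x
  · exact absurd hp (not_retained_zero _)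
  · have hpe : p = (g.root, 0) := by simpa [IsFringe] using hp
    show Sum.inr p = (truncRoot g 0).1
    unfold truncRoot
    rw [dif_pos rfl, hpe]

theorem tnode_zero_lab {g : TermGraph S.bot N} (x : TNode g 0) :
    (g.trunc 0).lab x = none := by
  obtain ⟨x1 | p, hp⟩ := x
  · exact absurd hp (not_retained_zero _)
  · rfl

theorem trunc_zero_iso (g : TermGraph S.bot N) (h : TermGraph S.bot M) :
    Iso (g.trunc 0) (h.trunc 0) := by
  refine ⟨fun _ => (h.trunc 0).root, fun _ => (g.trunc 0).root, ?_, ?_, ?_, ?_⟩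
  · refine ⟨rfl, fun x _ => ?_, fun x _ i hi hi' => ?_⟩
    · rw [tnode_zero_lab, tnode_zero_lab]
    · rw [tnode_zero_lab] at hi
      exact absurd hi (by simp [Signature.bot])
  · refine ⟨rfl, fun x _ => ?_, fun x _ i hi hi' => ?_⟩
    · rw [tnode_zero_lab, tnode_zero_lab]
    · rw [tnode_zero_lab] at hi
      exact absurd hi (by simp [Signature.bot])
  · exact fun x => (tnode_zero_eq_root x).symm
  · exact fun x => (tnode_zero_eq_root x).symm

theorem depth_suc_le {g : TermGraph S.bot N} (hr : g.Reachable) (n : N)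
    (i : ℕ) (hi : i < S.bot.ar (g.lab n)) :
    g.depth (g.suc n ⟨i, hi⟩) ≤ g.depth n + 1 := by
  obtain ⟨π₀, hπ₀⟩ := hr n
  obtain ⟨π, hπ, -, hlen⟩ := exists_acyclic_pos hπ₀
  have := depth_le_length (hπ.step ⟨i, hi⟩)
  simp only [List.length_append, List.length_cons, List.length_nil] at this
  omega

end TermGraph
end TGR
namespace TGR
namespace TermGraph

variable {S : Signature} {N M : Type} {k : TermGraph S.bot N} {g : TermGraph S.bot M}
  {φ : N → M} {d : ℕ}

theorem depth_ge_of_bot (hbd : (d : ℕ∞) ≤ k.botDepth) {n : N}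
    (h : k.lab n = none) : d ≤ k.depth n := by
  have := hbd.trans (sInf_le (show _ ∈ _ from ⟨n, h, rfl⟩))
  exact_mod_cast this

theorem ret_lab_ne (hbd : (d : ℕ∞) ≤ k.botDepth) {n : N}
    (hn : k.Retained d n) : k.lab n ≠ none := by
  induction hn with
  | @shallow n hdep =>
    intro hb
    have := depth_ge_of_bot hbd hb
    omega
  | @pred n m hn hm ih =>
    obtain ⟨π, i, ⟨hpos, -⟩, hmp⟩ := hm
    obtain ⟨m', hm', hi, -⟩ := isPos_snoc_iff.mp hpos
    obtain rfl : m' = m := isPos_unique hm' hmp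
    exact lab_ne_none_of_ar_pos (Nat.lt_of_le_of_lt (Nat.zero_le _) hi)

theorem ret_map (hφ : IsRigidBotHom k g φ) (hbd : (d : ℕ∞) ≤ k.botDepth)
    (hkr : k.Reachable) {n : N} (hn : k.Retained d n) : g.Retained d (φ n) := by
  induction hn with
  | @shallow n hdep =>
    have hlab : k.lab n ≠ none := by
      intro hb
      have := depth_ge_of_bot hbd hb
      omega
    obtain ⟨π₀, hπ₀⟩ := hkr n
    exact .shallow (by rw [← rigid_depth_eq hφ hlab hπ₀]; exact hdep)
  | @pred n m hn hm ih =>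
    obtain ⟨π, i, hmem, hmp⟩ := hm
    have hlab := ret_lab_ne hbd hn
    have hmem' : (π ++ [i]) ∈ g.nodePosAcy (φ n) := by
      rw [← rigid_nodePosAcy hφ hlab]; exact hmem
    exact .pred ih ⟨π, i, hmem', isPos_map_bot hφ hmp⟩

theorem ret_surj (hφ : IsRigidBotHom k g φ) (hbd : (d : ℕ∞) ≤ k.botDepth)
    (hgr : g.Reachable) {m : M} (hm : g.Retained d m) :
    ∃ n, k.Retained d n ∧ φ n = m := by
  induction hm with
  | @shallow m hdep =>
    obtain ⟨π₀, hπ₀⟩ := hgr m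
    obtain ⟨π, hπ, -, hlen⟩ := exists_acyclic_pos hπ₀
    rcases trace hφ hπ with ⟨n, hn, he⟩ | ⟨π', m', hpre, hm', hb⟩
    · exact ⟨n, .shallow (by have := depth_le_length hn; omega), he⟩
    · exfalso
      have h1 := depth_ge_of_bot hbd hb
      have h2 := depth_le_length hm'
      have h3 := hpre.length_le
      omega
  | @pred n m hn hm ih =>
    obtain ⟨n', hn', rfl⟩ := ih
    obtain ⟨π, i, hmem, hmp⟩ := hm
    have hmem' : (π ++ [i]) ∈ k.nodePosAcy n' := by
      rw [rigid_nodePosAcy hφ (ret_lab_ne hbd hn')]; exact hmem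
    obtain ⟨m₀, hm₀⟩ := isPos_prefix hmem'.1 ⟨[i], rfl⟩
    have he : φ m₀ = m := isPos_unique (isPos_map_bot hφ hm₀) hmp
    exact ⟨m₀, .pred hn' ⟨π, i, hmem', hm₀⟩, he⟩

theorem acyPred_transfer (hφ : IsRigidBotHom k g φ) {n s : N}
    (hn_lab : k.lab n ≠ none) (hs_lab : k.lab s ≠ none) :
    n ∈ k.acyPred s ↔ φ n ∈ g.acyPred (φ s) := by
  constructor
  · rintro ⟨π, j, hmem, hp⟩
    exact ⟨π, j, by rw [← rigid_nodePosAcy hφ hs_lab]; exact hmem,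
      isPos_map_bot hφ hp⟩
  · rintro ⟨σ, j, hmem, hσ⟩
    have hmem' : (σ ++ [j]) ∈ k.nodePosAcy s := by
      rw [rigid_nodePosAcy hφ hs_lab]; exact hmem
    obtain ⟨m₁, hm₁, hj, -⟩ := isPos_snoc_iff.mp hmem'.1
    have hm₁lab : k.lab m₁ ≠ none :=
      lab_ne_none_of_ar_pos (Nat.lt_of_le_of_lt (Nat.zero_le _) hj)
    have hm₁e : m₁ = n :=
      rigid_inj hφ hm₁lab hn_lab hm₁ (isPos_unique (isPos_map_bot hφ hm₁) hσ)
    subst hm₁e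
    exact ⟨σ, j, hmem', hm₁⟩

end TermGraph
end TGR
namespace TGR
namespace TermGraph

variable {S : Signature} {N M : Type} {k : TermGraph S.bot N} {g : TermGraph S.bot M}
  {φ : N → M} {d : ℕ}

theorem fringe_transfer (hφ : IsRigidBotHom k g φ) (hbd : (d : ℕ∞) ≤ k.botDepth)
    (hkr : k.Reachable) (hgr : g.Reachable) (hd : d ≠ 0) {n : N}
    (hn : k.Retained d n) (i : ℕ) :
    k.IsFringe d (n, i) ↔ g.IsFringe d (φ n, i) := by
  have hlab := ret_lab_ne hbd hn
  have hlabeq : g.lab (φ n) = k.lab n := hφ.1.lab_eq n (by exact hlab)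
  obtain ⟨π₀, hπ₀⟩ := hkr n
  have hdeq : k.depth n = g.depth (φ n) := rigid_depth_eq hφ hlab hπ₀
  unfold IsFringe
  rw [if_neg hd, if_neg hd]
  constructor
  · rintro ⟨-, hik, hdisj⟩
    refine ⟨ret_map hφ hbd hkr hn, ?_⟩
    have hig : i < S.bot.ar (g.lab (φ n)) := by rw [hlabeq]; exact hik
    refine ⟨hig, ?_⟩
    have hsuc : φ (k.suc n ⟨i, hik⟩) = g.suc (φ n) ⟨i, hig⟩ :=
      hφ.1.suc_eq n (by exact hlab) i hik hig
    by_cases hbot : k.lab (k.suc n ⟨i, hik⟩) = none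
    · -- the successor in `k` is a `⊥`-node
      by_contra hng
      rw [not_or] at hng
      obtain ⟨h1, h2⟩ := hng
      have hretg : g.Retained d (g.suc (φ n) ⟨i, hig⟩) := not_not.mp h1
      by_cases hdep : d - 1 ≤ g.depth (φ n)
      · -- extract an acyclic-predecessor witness
        have hmem : φ n ∈ g.acyPred (g.suc (φ n) ⟨i, hig⟩) := by
          by_contra hnm
          exact h2 ⟨hdep, hnm⟩
        obtain ⟨σ, j, ⟨hposg, hacg⟩, hσφ⟩ := hmem
        obtain ⟨n', hn', hφn'⟩ := ret_surj hφ hbd hgr hretg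
        have hlabn' := ret_lab_ne hbd hn'
        have hmemk : (σ ++ [j]) ∈ k.nodePosAcy n' := by
          rw [rigid_nodePosAcy hφ hlabn', hφn']; exact ⟨hposg, hacg⟩
        obtain ⟨m₁, hm₁, hj, hen'⟩ := isPos_snoc_iff.mp hmemk.1
        obtain rfl : n = m₁ := by
          symm
          apply rigid_inj hφ
            (lab_ne_none_of_ar_pos (Nat.lt_of_le_of_lt (Nat.zero_le _) hj)) hlab hm₁
          exact isPos_unique (isPos_map_bot hφ hm₁) hσφ
        by_cases hji : j = i
        · subst hji
          apply hlabn'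
          rw [hen']
          exact hbot
        · have hposσi : g.IsPos (σ ++ [i]) (g.suc (φ n) ⟨i, hig⟩) := hσφ.step ⟨i, hig⟩
          by_cases hacσi : g.IsAcyclicPos (σ ++ [i])
          · have hmem2 : (σ ++ [i]) ∈ k.nodePosAcy n' := by
              rw [rigid_nodePosAcy hφ hlabn', hφn']; exact ⟨hposσi, hacσi⟩
            have hposki : k.IsPos (σ ++ [i]) (k.suc n ⟨i, hik⟩) := hm₁.step ⟨i, hik⟩
            have he : n' = k.suc n ⟨i, hik⟩ := isPos_unique hmem2.1 hposki
            exact hlabn' (he ▸ hbot)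
          · unfold IsAcyclicPos at hacσi
            push_neg at hacσi
            obtain ⟨π₁, π₂, y, hp12, hp2, hy1, hy2, hne⟩ := hacσi
            have hacσ : g.IsAcyclicPos σ := isAcyclicPos_prefix hacg ⟨[j], rfl⟩
            have hπ₂ : π₂ = σ ++ [i] := by
              rcases List.prefix_concat_iff.mp hp2 with h | h
              · exact h
              · exact absurd (hacσ π₁ π₂ y hp12 h hy1 hy2) hne
            subst hπ₂
            obtain rfl : y = g.suc (φ n) ⟨i, hig⟩ := isPos_unique hy2 hposσi
            have hπ₁σ : π₁ <+: σ := by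
              rcases List.prefix_concat_iff.mp hp12 with h | h
              · exact absurd h hne
              · exact h
            have hπ₁k : π₁ <+: σ ++ [j] := hπ₁σ.trans ⟨[j], rfl⟩
            obtain ⟨m₂, hm₂⟩ := isPos_prefix hmemk.1 hπ₁k
            have hne₁ : π₁ ≠ σ ++ [j] := by
              intro he
              rw [he] at hπ₁σ
              have := hπ₁σ.length_le
              simp at this
            have hm₂lab :=
              lab_ne_none_of_ar_pos (ar_pos_of_proper_prefix hmemk.1 hπ₁k hne₁ hm₂)
            have hm₂e : m₂ = n' := by
              apply rigid_inj hφ hm₂lab hlabn' hm₂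
              rw [hφn']
              exact isPos_unique (isPos_map_bot hφ hm₂) hy1
            rw [hm₂e] at hm₂
            exact hne₁ (hmemk.2 π₁ (σ ++ [j]) n' hπ₁k (List.prefix_refl _) hm₂ hmemk.1)
      · -- the node is too shallow: contradiction with the `⊥`-depth bound
        have hd1 := depth_suc_le hkr n i hik
        have hd2 := depth_ge_of_bot hbd hbot
        omega
    · -- the successor in `k` is not a `⊥`-node
      rcases hdisj with hnr | ⟨hdep, hnp⟩
      · left
        intro hret
        obtain ⟨n', hn', hφn'⟩ := ret_surj hφ hbd hgr hret
        obtain ⟨π₁, hπ₁⟩ := hkr n'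
        have he : n' = k.suc n ⟨i, hik⟩ := by
          apply rigid_inj hφ (ret_lab_ne hbd hn') hbot hπ₁
          rw [hφn', hsuc]
        exact hnr (he ▸ hn')
      · by_cases hret : g.Retained d (g.suc (φ n) ⟨i, hig⟩)
        · right
          refine ⟨by rw [← hdeq]; exact hdep, ?_⟩
          intro hmem
          apply hnp
          rw [← hsuc] at hmem
          exact (acyPred_transfer hφ hlab hbot).mpr hmem
        · left; exact hret
  · rintro ⟨hretg, hig, hdisj⟩
    have hik : i < S.bot.ar (k.lab n) := by rw [← hlabeq]; exact hig
    refine ⟨hn, hik, ?_⟩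
    have hsuc : φ (k.suc n ⟨i, hik⟩) = g.suc (φ n) ⟨i, hig⟩ :=
      hφ.1.suc_eq n (by exact hlab) i hik hig
    by_cases hbot : k.lab (k.suc n ⟨i, hik⟩) = none
    · left
      intro hret
      exact (ret_lab_ne hbd hret) hbot
    · rcases hdisj with hnrg | ⟨hdepg, hnpg⟩
      · left
        intro hret
        have := ret_map hφ hbd hkr hret
        rw [hsuc] at this
        exact hnrg this
      · right
        refine ⟨by rw [hdeq]; exact hdepg, ?_⟩
        intro hmem
        apply hnpg
        have := (acyPred_transfer hφ hlab hbot).mp hmem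
        rwa [hsuc] at this

end TermGraph
end TGR
namespace TGR
namespace TermGraph

variable {S : Signature} {N M : Type} {k : TermGraph S.bot N} {g : TermGraph S.bot M}
  {φ : N → M} {d : ℕ}

theorem fringe_ret (hd : d ≠ 0) {t : TermGraph S.bot N} {p : N × ℕ}
    (hp : t.IsFringe d p) : t.Retained d p.1 := by
  unfold IsFringe at hp
  rw [if_neg hd] at hp
  exact hp.1

theorem trunc_iso_of_rigid (hφ : IsRigidBotHom k g φ) (hbd : (d : ℕ∞) ≤ k.botDepth)
    (hkr : k.Reachable) (hgr : g.Reachable) (hd : d ≠ 0) :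
    Iso (k.trunc d) (g.trunc d) := by
  classical
  set ψ₀ : M → N := fun m => if h : ∃ n, k.Retained d n ∧ φ n = m then h.choose
    else k.root with hψ₀
  have ψ₀spec : ∀ m : M, g.Retained d m → k.Retained d (ψ₀ m) ∧ φ (ψ₀ m) = m := by
    intro m hm
    have hex : ∃ n, k.Retained d n ∧ φ n = m := ret_surj hφ hbd hgr hm
    rw [hψ₀]
    simp only [dif_pos hex]
    exact hex.choose_spec
  set Φ : TNode k d → TNode g d := fun x =>
    ⟨Sum.map φ (fun p => (φ p.1, p.2)) x.1, by
      obtain ⟨x1 | p, hp⟩ := x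
      · exact ret_map hφ hbd hkr hp
      · show g.IsFringe d (φ p.1, p.2)
        exact (fringe_transfer hφ hbd hkr hgr hd (fringe_ret hd hp) p.2).mp
          (by rwa [Prod.mk.eta])⟩ with hΦ
  set Ψ : TNode g d → TNode k d := fun y =>
    ⟨Sum.map ψ₀ (fun q => (ψ₀ q.1, q.2)) y.1, by
      obtain ⟨y1 | q, hq⟩ := y
      · exact (ψ₀spec y1 hq).1
      · show k.IsFringe d (ψ₀ q.1, q.2)
        have hql : g.Retained d q.1 := fringe_ret hd hq
        have hs := ψ₀spec q.1 hql
        apply (fringe_transfer hφ hbd hkr hgr hd hs.1 q.2).mpr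
        rw [hs.2]
        rwa [Prod.mk.eta]⟩ with hΨ
  have h1 : ∀ x, Ψ (Φ x) = x := by
    intro x
    apply Subtype.ext
    obtain ⟨x1 | p, hp⟩ := x
    · show Sum.inl (ψ₀ (φ x1)) = Sum.inl x1
      have hret : k.Retained d x1 := hp
      have hs := ψ₀spec (φ x1) (ret_map hφ hbd hkr hret)
      obtain ⟨π₁, hπ₁⟩ := hkr (ψ₀ (φ x1))
      exact congrArg _
        (rigid_inj hφ (ret_lab_ne hbd hs.1) (ret_lab_ne hbd hret) hπ₁ hs.2)
    · show Sum.inr (ψ₀ (φ p.1), p.2) = Sum.inr p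
      have hret : k.Retained d p.1 := fringe_ret hd hp
      have hs := ψ₀spec (φ p.1) (ret_map hφ hbd hkr hret)
      obtain ⟨π₁, hπ₁⟩ := hkr (ψ₀ (φ p.1))
      have : ψ₀ (φ p.1) = p.1 :=
        rigid_inj hφ (ret_lab_ne hbd hs.1) (ret_lab_ne hbd hret) hπ₁ hs.2
      rw [this]
  have h2 : ∀ y, Φ (Ψ y) = y := by
    intro y
    apply Subtype.ext
    obtain ⟨y1 | q, hq⟩ := y
    · show Sum.inl (φ (ψ₀ y1)) = Sum.inl y1
      rw [(ψ₀spec y1 hq).2]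
    · show Sum.inr (φ (ψ₀ q.1), q.2) = Sum.inr q
      rw [(ψ₀spec q.1 (fringe_ret hd hq)).2]
  have hhom : IsDHom ∅ (k.trunc d) (g.trunc d) Φ := by
    refine ⟨?_, ?_, ?_⟩
    · apply Subtype.ext
      have hrk : (k.trunc d).root.1 = Sum.inl k.root := truncRoot_val hd
      have hrg : (g.trunc d).root.1 = Sum.inl g.root := truncRoot_val hd
      show Sum.map φ _ (k.trunc d).root.1 = (g.trunc d).root.1
      rw [hrk, hrg]
      show Sum.inl (φ k.root) = Sum.inl g.root
      rw [hφ.1.root_eq]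
    · rintro ⟨x1 | p, hp⟩ -
      · show (g.trunc d).lab ⟨Sum.inl (φ x1), _⟩ = (k.trunc d).lab ⟨Sum.inl x1, hp⟩
        rw [truncLab_inl _ rfl, truncLab_inl _ rfl]
        exact hφ.1.lab_eq x1 (by exact ret_lab_ne hbd hp)
      · rfl
    · rintro ⟨x1 | p, hp⟩ - i hi hi'
      swap
      · have hz : (k.trunc d).lab ⟨Sum.inr p, hp⟩ = none := rfl
        rw [hz] at hi
        exact absurd hi (by simp [Signature.bot])
      · have hik : i < S.bot.ar (k.lab x1) := by rwa [truncLab_inl _ rfl] at hi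
        have hig : i < S.bot.ar (g.lab (φ x1)) := by
          rw [hφ.1.lab_eq x1 (by exact ret_lab_ne hbd hp)]; exact hik
        have hΦval : Φ ⟨Sum.inl x1, hp⟩ =
            ⟨Sum.inl (φ x1), ret_map hφ hbd hkr hp⟩ := rfl
        apply Subtype.ext
        by_cases hf : k.IsFringe d (x1, i)
        · have hfg : g.IsFringe d (φ x1, i) :=
            (fringe_transfer hφ hbd hkr hgr hd hp i).mp hf
          have hvk : ((k.trunc d).suc ⟨Sum.inl x1, hp⟩ ⟨i, hi⟩).1 =
              Sum.inr (x1, i) := by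
            show (truncSuc k d ⟨Sum.inl x1, hp⟩ ⟨i, hi⟩).1 = _
            simp only [truncSuc, hf, dif_pos]
          have hvg : ((g.trunc d).suc (Φ ⟨Sum.inl x1, hp⟩) ⟨i, hi'⟩).1 =
              Sum.inr (φ x1, i) := by
            show (truncSuc g d ⟨Sum.inl (φ x1), ret_map hφ hbd hkr hp⟩ ⟨i, hi'⟩).1 = _
            simp only [truncSuc, hfg, dif_pos]
          show Sum.map φ _ ((k.trunc d).suc ⟨Sum.inl x1, hp⟩ ⟨i, hi⟩).1 = _
          rw [hvk, hvg]
          rfl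
        · have hfg : ¬ g.IsFringe d (φ x1, i) :=
            fun hh => hf ((fringe_transfer hφ hbd hkr hgr hd hp i).mpr hh)
          have hvk : ((k.trunc d).suc ⟨Sum.inl x1, hp⟩ ⟨i, hi⟩).1 =
              Sum.inl (k.suc x1 ⟨i, hik⟩) := by
            show (truncSuc k d ⟨Sum.inl x1, hp⟩ ⟨i, hi⟩).1 = _
            simp only [truncSuc, hf, dif_neg, not_false_iff]
          have hvg : ((g.trunc d).suc (Φ ⟨Sum.inl x1, hp⟩) ⟨i, hi'⟩).1 =
              Sum.inl (g.suc (φ x1) ⟨i, hig⟩) := by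
            show (truncSuc g d ⟨Sum.inl (φ x1), ret_map hφ hbd hkr hp⟩ ⟨i, hi'⟩).1 = _
            simp only [truncSuc, hfg, dif_neg, not_false_iff]
          show Sum.map φ _ ((k.trunc d).suc ⟨Sum.inl x1, hp⟩ ⟨i, hi⟩).1 = _
          rw [hvk, hvg]
          show Sum.inl (φ (k.suc x1 ⟨i, hik⟩)) = _
          rw [hφ.1.suc_eq x1 (by exact ret_lab_ne hbd hp) i hik hig]
  exact ⟨Φ, Ψ, hhom, hhom.inv h1 h2, h1, h2⟩

end TermGraph
end TGR
namespace TGR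

/-- For all total canonical term graphs `g` and `h`, the rigid
similarity equals the `⊥`-depth of the greatest lower bound `g ⊓ h` taken in the
complete semilattice of canonical partial term graphs ordered by `≤⊥r`. -/
theorem similarity_eq_botDepth_glb (S : Signature) (g h : CTG S.bot)
    (hg : g.Total) (hh : h.Total) (k : CTG S.bot)
    (hk : CTG.IsGlbR {g, h} k) :
    CTG.simr g h = CTG.botDepth k := by
  have hgmem : g ∈ ({g, h} : Set (CTG S.bot)) := Set.mem_insert _ _
  have hhmem : h ∈ ({g, h} : Set (CTG S.bot)) := Set.mem_insert_of_mem _ rfl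
  apply le_antisymm
  · apply sSup_le
    intro d hd
    revert hd
    induction d using ENat.recTopCoe with
    | top =>
      intro hd
      have hiso : TermGraph.Iso g.tg h.tg := hd.1 rfl
      have hlb : CTG.IsLB {g, h} g := by
        intro x hx
        simp only [Set.mem_insert_iff, Set.mem_singleton_iff] at hx
        rcases hx with rfl | rfl
        · exact ⟨id, TermGraph.isRigidBotHom_id _⟩
        · exact hiso.isRigidBotHom
      obtain ⟨φk, hφk⟩ := hk.2 g hlb
      have hmono := TermGraph.botDepth_mono hφk k.reach
      rw [TermGraph.botDepth_eq_top_iff.mpr hg] at hmono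
      exact hmono
    | coe c =>
      intro hd
      have hiso := hd.2 c rfl
      by_cases hc : c = 0
      · subst hc; simp
      · obtain ⟨w, hw⟩ := TermGraph.exists_canonical (g.tg.trunc c)
          (TermGraph.trunc_reachable g.reach c)
        have hwg : CTG.LeR w g := by
          obtain ⟨φ₀, hφ₀⟩ := hw.isRigidBotHom
          exact ⟨_, TermGraph.IsRigidDHom.comp hφ₀
            (TermGraph.truncMap_isRigidBotHom g.tg hc)⟩
        have hwh : CTG.LeR w h := by
          obtain ⟨φ₀, hφ₀⟩ := (hw.trans hiso).isRigidBotHom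
          exact ⟨_, TermGraph.IsRigidDHom.comp hφ₀
            (TermGraph.truncMap_isRigidBotHom h.tg hc)⟩
        have hlb : CTG.IsLB {g, h} w := by
          intro x hx
          simp only [Set.mem_insert_iff, Set.mem_singleton_iff] at hx
          rcases hx with rfl | rfl
          · exact hwg
          · exact hwh
        obtain ⟨φk, hφk⟩ := hk.2 w hlb
        have h1 := TermGraph.botDepth_mono hφk k.reach
        have h2 : (c : ℕ∞) ≤ w.tg.botDepth := by
          rw [hw.botDepth_eq]
          exact TermGraph.le_botDepth_trunc g.reach hg c
        exact h2.trans h1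
  · by_cases htop : CTG.botDepth k = ⊤
    · have hktot : k.Total := TermGraph.botDepth_eq_top_iff.mp htop
      obtain ⟨φg, hφg⟩ := hk.1 g hgmem
      obtain ⟨φh, hφh⟩ := hk.1 h hhmem
      have ig := TermGraph.iso_of_total_rigid hφg k.reach g.reach hktot
      have ih' := TermGraph.iso_of_total_rigid hφh k.reach h.reach hktot
      have hgh := ig.symm.trans ih'
      have hmem : (⊤ : ℕ∞) ∈ {d : ℕ∞ | CTG.TruncIso g.tg h.tg d} :=
        ⟨fun _ => hgh, fun c hc => absurd hc.symm (by simp)⟩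
      rw [htop]
      exact le_sSup hmem
    · obtain ⟨c, hc⟩ := WithTop.ne_top_iff_exists.mp htop
      rw [← hc]
      apply le_sSup
      show CTG.TruncIso g.tg h.tg (c : ℕ∞)
      refine ⟨fun ht => absurd ht (by simp), fun c' hc' => ?_⟩
      obtain rfl : c = c' := by exact_mod_cast hc'
      by_cases hc0 : c = 0
      · subst hc0; exact TermGraph.trunc_zero_iso _ _
      · obtain ⟨φg, hφg⟩ := hk.1 g hgmem
        obtain ⟨φh, hφh⟩ := hk.1 h hhmem
        have hbd : (c : ℕ∞) ≤ k.tg.botDepth := le_of_eq hc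
        have i1 := TermGraph.trunc_iso_of_rigid hφg hbd k.reach g.reach hc0
        have i2 := TermGraph.trunc_iso_of_rigid hφh hbd k.reach h.reach hc0
        exact i1.symm.trans i2

end TGR
end

section
/- Let Σ be a non-empty signature. The maximal elements of the partially ordered set of canonical partial term graphs over Σ_⊥ under the rigid partial order ≤⊥r are exactly the total canonical term graphs (those containing no ⊥-labelled node). -/
set_option autoImplicit false

namespace TGR
namespace Aux

open TermGraph

variable {S : Signature} {N M : Type}

lemma isPos_nil_aux {g : TermGraph S N} {π : List ℕ} {n : N}
    (h : g.IsPos π n) (hπ : π = []) : n = g.root := by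
  cases h with
  | root => rfl
  | step h i => simp at hπ

lemma isPos_nil {g : TermGraph S N} {n : N} (h : g.IsPos [] n) : n = g.root :=
  isPos_nil_aux h rfl

lemma isPos_concat_aux {g : TermGraph S N} {ρ : List ℕ} {m : N}
    (h : g.IsPos ρ m) : ∀ (π : List ℕ) (i : ℕ), ρ = π ++ [i] →
    ∃ (n : N) (hn : i < S.ar (g.lab n)), g.IsPos π n ∧ m = g.suc n ⟨i, hn⟩ := by
  cases h with
  | root => intro π i hπ; simp at hπ
  | step h j =>
    intro π i hπ
    obtain ⟨h1, h2⟩ := List.append_inj' hπ rfl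
    subst h1
    simp only [List.cons.injEq, and_true] at h2
    subst h2
    exact ⟨_, j.isLt, h, rfl⟩

lemma isPos_concat {g : TermGraph S N} {π : List ℕ} {i : ℕ} {m : N}
    (h : g.IsPos (π ++ [i]) m) :
    ∃ (n : N) (hn : i < S.ar (g.lab n)), g.IsPos π n ∧ m = g.suc n ⟨i, hn⟩ :=
  isPos_concat_aux h π i rfl

lemma pos_unique {g : TermGraph S N} {π : List ℕ} {n m : N}
    (h1 : g.IsPos π n) (h2 : g.IsPos π m) : n = m := by
  induction h1 generalizing m with
  | root => exact (isPos_nil h2).symm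
  | step h i ih =>
    obtain ⟨n', hn', hp, hm⟩ := isPos_concat h2
    cases ih hp
    subst hm; rfl

lemma prefix_pos {g : TermGraph S N} {π : List ℕ} {n : N}
    (h : g.IsPos π n) : ∀ π₂, π₂ <+: π → ∃ m, g.IsPos π₂ m := by
  induction h with
  | root =>
    intro π₂ hp
    rw [List.prefix_nil.mp hp]
    exact ⟨_, IsPos.root⟩
  | @step π n h i ih =>
    intro π₂ hp
    rcases Nat.lt_or_ge π.length π₂.length with hl | hl
    · have hlen : π₂.length = (π ++ [(i : ℕ)]).length := by
        have h1 := hp.length_le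
        simp only [List.length_append, List.length_cons, List.length_nil] at h1 ⊢
        omega
      rw [List.IsPrefix.eq_of_length hp hlen]
      exact ⟨_, IsPos.step h i⟩
    · exact ih π₂ (List.prefix_of_prefix_length_le hp (List.prefix_append π [(i:ℕ)]) hl)

lemma replace_prefix {g : TermGraph S N} {π₁ π₂ : List ℕ} {m : N}
    (h1 : g.IsPos π₁ m) (h2 : g.IsPos π₂ m) :
    ∀ (t : List ℕ) {n : N}, g.IsPos (π₂ ++ t) n → g.IsPos (π₁ ++ t) n := by
  intro t
  induction t using List.reverseRecOn with
  | nil =>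
    intro n hn
    simp only [List.append_nil] at hn ⊢
    cases pos_unique h2 hn
    exact h1
  | append_singleton t i ih =>
    intro n hn
    rw [← List.append_assoc] at hn
    obtain ⟨n', hn', hp, hm⟩ := isPos_concat hn
    subst hm
    rw [← List.append_assoc]
    exact IsPos.step (ih hp) ⟨i, hn'⟩

lemma not_acyclic {g : TermGraph S N} {π : List ℕ} (h : ¬ g.IsAcyclicPos π) :
    ∃ (π₁ π₂ : List ℕ) (n : N), π₁ <+: π₂ ∧ π₂ <+: π ∧ g.IsPos π₁ n ∧
      g.IsPos π₂ n ∧ π₁ ≠ π₂ := by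
  unfold TermGraph.IsAcyclicPos at h
  push_neg at h
  obtain ⟨π₁, π₂, n, h1, h2, h3, h4, h5⟩ := h
  exact ⟨π₁, π₂, n, h1, h2, h3, h4, h5⟩

lemma exists_acyclic_aux {g : TermGraph S N} :
    ∀ (k : ℕ) (π : List ℕ) (n : N), g.IsPos π n → π.length ≤ k →
    ∃ ρ, g.IsPos ρ n ∧ g.IsAcyclicPos ρ := by
  intro k
  induction k with
  | zero =>
    intro π n hπ hl
    refine ⟨π, hπ, ?_⟩
    intro π₁ π₂ m hp1 hp2 _ _
    have : π = [] := List.length_eq_zero_iff.mp (Nat.le_zero.mp hl)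
    subst this
    rw [List.prefix_nil.mp (hp1.trans hp2), List.prefix_nil.mp hp2]
  | succ k ih =>
    intro π n hπ hl
    by_cases hac : g.IsAcyclicPos π
    · exact ⟨π, hπ, hac⟩
    · obtain ⟨π₁, π₂, m, hp1, hp2, hm1, hm2, hne⟩ := not_acyclic hac
      obtain ⟨t, ht⟩ := hp2
      subst ht
      have hlt : π₁.length < π₂.length := by
        rcases Nat.lt_or_ge π₁.length π₂.length with h | h
        · exact h
        · exact absurd (List.IsPrefix.eq_of_length hp1
            (le_antisymm hp1.length_le h)) hne
      have := replace_prefix hm1 hm2 t hπ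
      apply ih _ _ this
      simp only [List.length_append] at hl ⊢
      omega

lemma exists_acyclic {g : TermGraph S N} {π : List ℕ} {n : N}
    (hπ : g.IsPos π n) : ∃ ρ, g.IsPos ρ n ∧ g.IsAcyclicPos ρ :=
  exists_acyclic_aux π.length π n hπ le_rfl

section HomTransfer

variable {g : TermGraph S.bot N} {h : TermGraph S.bot M} {φ : N → M}

lemma total_not_bot (ht : g.Total) (n : N) :
    g.lab n ∉ ({none} : Set (Option S.Sym)) := by
  exact fun hm => ht n (Set.mem_singleton_iff.mp hm)

lemma hom_fwd (ht : g.Total) (hφ : TermGraph.IsDHom ({none} : Set (Option S.Sym)) g h φ)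
    {π : List ℕ} {n : N} (hp : g.IsPos π n) : h.IsPos π (φ n) := by
  induction hp with
  | root => rw [hφ.root_eq]; exact TermGraph.IsPos.root
  | @step π n hp i ih =>
    have hlab := hφ.lab_eq n (total_not_bot ht n)
    have hi' : (i : ℕ) < (S.bot).ar (h.lab (φ n)) := by rw [hlab]; exact i.isLt
    have := hφ.suc_eq n (total_not_bot ht n) i i.isLt hi'
    have hstep := TermGraph.IsPos.step ih ⟨(i : ℕ), hi'⟩
    rw [← this] at hstep
    simpa using hstep

lemma hom_bwd (ht : g.Total) (hφ : TermGraph.IsDHom ({none} : Set (Option S.Sym)) g h φ)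
    {π : List ℕ} {m : M} (hp : h.IsPos π m) : ∃ n, φ n = m ∧ g.IsPos π n := by
  induction hp with
  | root => exact ⟨g.root, hφ.root_eq, TermGraph.IsPos.root⟩
  | @step π m hp i ih =>
    obtain ⟨n, hn, hpn⟩ := ih
    subst hn
    have hlab := hφ.lab_eq n (total_not_bot ht n)
    have hi : (i : ℕ) < (S.bot).ar (g.lab n) := by rw [← hlab]; exact i.isLt
    refine ⟨g.suc n ⟨(i : ℕ), hi⟩, ?_, TermGraph.IsPos.step hpn ⟨(i : ℕ), hi⟩⟩
    rw [hφ.suc_eq n (total_not_bot ht n) (i : ℕ) hi i.isLt]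

end HomTransfer

lemma ctg_eq {S : Signature} (g h : CTG S) (hn : g.nodes = h.nodes)
    (hroot : (↑g.tg.root : Set (List ℕ)) = ↑h.tg.root)
    (hlab : ∀ (x : Set (List ℕ)) (hg : x ∈ g.nodes) (hh : x ∈ h.nodes),
      g.tg.lab ⟨x, hg⟩ = h.tg.lab ⟨x, hh⟩)
    (hsuc : ∀ (x : Set (List ℕ)) (hg : x ∈ g.nodes) (hh : x ∈ h.nodes)
      (i : ℕ) (hig : i < S.ar (g.tg.lab ⟨x, hg⟩)) (hih : i < S.ar (h.tg.lab ⟨x, hh⟩)),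
      (↑(g.tg.suc ⟨x, hg⟩ ⟨i, hig⟩) : Set (List ℕ)) = ↑(h.tg.suc ⟨x, hh⟩ ⟨i, hih⟩)) :
    g = h := by
  obtain ⟨ng, tg, rg, cg⟩ := g
  obtain ⟨nh, th, rh, ch⟩ := h
  simp only at hn hroot hlab hsuc
  subst hn
  have htg : tg = th := by
    obtain ⟨lg, sg, rtg⟩ := tg
    obtain ⟨lh, sh, rth⟩ := th
    simp only at hroot hlab hsuc
    have hl : lg = lh := funext fun n => hlab ↑n n.2 n.2
    subst hl
    have hr : rtg = rth := Subtype.ext hroot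
    subst hr
    have hs : sg = sh := by
      funext n i
      exact Subtype.ext (hsuc ↑n n.2 n.2 ↑i i.isLt i.isLt)
    subst hs
    rfl
  subst htg
  rfl

lemma suc_congr {S : Signature} {M : Type} (h : TermGraph S M) {m m' : M}
    (e : m = m') (i : ℕ) (hi : i < S.ar (h.lab m)) (hi' : i < S.ar (h.lab m')) :
    h.suc m ⟨i, hi⟩ = h.suc m' ⟨i, hi'⟩ := by subst e; rfl

lemma total_max {S : Signature} (g : CTG S.bot) (ht : g.Total) :
    ∀ h : CTG S.bot, CTG.LeR g h → g = h := by
  intro h hle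
  obtain ⟨φ, hhom, hrig⟩ := hle
  have φinj : Function.Injective φ := by
    intro a b hab
    have ha := hrig a (total_not_bot ht a)
    have hb := hrig b (total_not_bot ht b)
    rw [hab, ← hb] at ha
    obtain ⟨π, hπ⟩ := g.reach a
    obtain ⟨ρ, hρ, hac⟩ := exists_acyclic hπ
    have : ρ ∈ g.tg.nodePosAcy a := ⟨hρ, hac⟩
    rw [ha] at this
    exact pos_unique hρ this.1
  have hnodePos : ∀ n : ↥g.nodes, g.tg.nodePos n = h.tg.nodePos (φ n) := by
    intro n
    ext π
    constructor
    · exact fun hp => hom_fwd ht hhom hp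
    · intro hp
      obtain ⟨n', hn', hpn⟩ := hom_bwd ht hhom hp
      rwa [← φinj hn']
  have hkey : ∀ n : ↥g.nodes, (↑(φ n) : Set (List ℕ)) = ↑n := by
    intro n
    rw [g.canon n, h.canon (φ n), hnodePos]
  have hnodes : g.nodes = h.nodes := by
    ext x
    constructor
    · intro hx
      have : (↑(φ ⟨x, hx⟩) : Set (List ℕ)) = x := hkey ⟨x, hx⟩
      rw [← this]
      exact (φ ⟨x, hx⟩).2
    · intro hx
      obtain ⟨π, hπ⟩ := h.reach ⟨x, hx⟩
      obtain ⟨n, hn, _⟩ := hom_bwd ht hhom hπ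
      have : (↑(φ n) : Set (List ℕ)) = x := by rw [hn]
      rw [← this, hkey n]
      exact n.2
  apply ctg_eq g h hnodes
  · have := hkey g.tg.root
    rw [hhom.root_eq] at this
    exact this.symm
  · intro x hg hh
    have hm : (⟨x, hh⟩ : ↥h.nodes) = φ ⟨x, hg⟩ :=
      Subtype.ext (hkey ⟨x, hg⟩).symm
    rw [hm]
    exact (hhom.lab_eq ⟨x, hg⟩ (total_not_bot ht _)).symm
  · intro x hg hh i hig hih
    have hm : (⟨x, hh⟩ : ↥h.nodes) = φ ⟨x, hg⟩ :=
      Subtype.ext (hkey ⟨x, hg⟩).symm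
    have hi' : i < (S.bot).ar (h.tg.lab (φ ⟨x, hg⟩)) := by
      rw [← hm]; exact hih
    rw [suc_congr h.tg hm i hih hi',
      ← hhom.suc_eq ⟨x, hg⟩ (total_not_bot ht _) i hig hi']
    exact (hkey _).symm

lemma labAt_eq {S : Signature} {N : Type} {g : TermGraph S N} {π : List ℕ} {n : N}
    (hπ : g.IsPos π n) : g.labAt π = g.lab n := by
  unfold TermGraph.labAt TermGraph.nodeAt
  rw [dif_pos ⟨n, hπ⟩]
  exact congrArg g.lab (pos_unique (Exists.choose_spec (⟨n, hπ⟩ : ∃ m, g.IsPos π m)) hπ)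

section Ext

variable {S : Signature} (g : CTG S.bot) (n₀ : ↥g.nodes) (f : S.Sym)

def childSet (i : ℕ) : Set (List ℕ) := {ρ | ∃ π, g.tg.IsPos π n₀ ∧ ρ = π ++ [i]}

def newNodes : Set (Set (List ℕ)) :=
  g.nodes ∪ {x | ∃ i, i < S.ar f ∧ x = childSet g n₀ i}

open Classical in
noncomputable def elab' (m : ↥(newNodes g n₀ f)) : Option S.Sym :=
  if hm : (↑m : Set (List ℕ)) ∈ g.nodes then
    (if (↑m : Set (List ℕ)) = ↑n₀ then some f else g.tg.lab ⟨↑m, hm⟩)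
  else none

lemma elab_n0 (m : ↥(newNodes g n₀ f)) (hm : (↑m : Set (List ℕ)) ∈ g.nodes)
    (he : (↑m : Set (List ℕ)) = ↑n₀) : elab' g n₀ f m = some f := by
  unfold elab'; rw [dif_pos hm]; exact if_pos he

lemma elab_old (m : ↥(newNodes g n₀ f)) (hm : (↑m : Set (List ℕ)) ∈ g.nodes)
    (he : (↑m : Set (List ℕ)) ≠ ↑n₀) : elab' g n₀ f m = g.tg.lab ⟨↑m, hm⟩ := by
  unfold elab'; rw [dif_pos hm]; exact if_neg he

lemma elab_new (m : ↥(newNodes g n₀ f)) (hm : (↑m : Set (List ℕ)) ∉ g.nodes) :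
    elab' g n₀ f m = none := by
  unfold elab'; rw [dif_neg hm]

open Classical in
noncomputable def esuc (m : ↥(newNodes g n₀ f))
    (i : Fin ((S.bot).ar (elab' g n₀ f m))) : ↥(newNodes g n₀ f) :=
  if hm : (↑m : Set (List ℕ)) ∈ g.nodes then
    if he : (↑m : Set (List ℕ)) = ↑n₀ then
      ⟨childSet g n₀ ↑i, Or.inr ⟨↑i, by
        have h := i.isLt
        have he' : (S.bot).ar (elab' g n₀ f m) = S.ar f := by
          rw [elab_n0 g n₀ f m hm he]; rfl
        exact lt_of_lt_of_eq h he', rfl⟩⟩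
    else
      ⟨↑(g.tg.suc ⟨↑m, hm⟩ ⟨↑i, by
        have h := i.isLt
        have he' : (S.bot).ar (elab' g n₀ f m) =
            (S.bot).ar (g.tg.lab ⟨↑m, hm⟩) := by
          rw [elab_old g n₀ f m hm he]
        exact lt_of_lt_of_eq h he'⟩), Or.inl (Subtype.coe_prop _)⟩
  else
    False.elim (by
      have he' : (S.bot).ar (elab' g n₀ f m) = 0 := by
        rw [elab_new g n₀ f m hm]; rfl
      exact Nat.not_lt_zero _ (lt_of_lt_of_eq i.isLt he'))

lemma esuc_n0 (m : ↥(newNodes g n₀ f)) (hm : (↑m : Set (List ℕ)) ∈ g.nodes)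
    (he : (↑m : Set (List ℕ)) = ↑n₀) (i : Fin ((S.bot).ar (elab' g n₀ f m)))
    (hi : (i : ℕ) < S.ar f) :
    esuc g n₀ f m i = ⟨childSet g n₀ ↑i, Or.inr ⟨↑i, hi, rfl⟩⟩ := by
  unfold esuc
  rw [dif_pos hm, dif_pos he]

lemma esuc_old (m : ↥(newNodes g n₀ f)) (hm : (↑m : Set (List ℕ)) ∈ g.nodes)
    (he : (↑m : Set (List ℕ)) ≠ ↑n₀) (i : Fin ((S.bot).ar (elab' g n₀ f m)))
    (hi : (i : ℕ) < (S.bot).ar (g.tg.lab ⟨↑m, hm⟩)) :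
    esuc g n₀ f m i =
      ⟨↑(g.tg.suc ⟨↑m, hm⟩ ⟨↑i, hi⟩), Or.inl (Subtype.coe_prop _)⟩ := by
  unfold esuc
  rw [dif_pos hm, dif_neg he]

noncomputable def eroot : ↥(newNodes g n₀ f) :=
  ⟨↑g.tg.root, Or.inl (Subtype.coe_prop _)⟩

noncomputable def H : TermGraph S.bot ↥(newNodes g n₀ f) :=
  ⟨elab' g n₀ f, esuc g n₀ f, eroot g n₀ f⟩

noncomputable def φ₀ : ↥g.nodes → ↥(newNodes g n₀ f) := fun n => ⟨↑n, Or.inl n.2⟩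

variable (h0 : g.tg.lab n₀ = none)

include h0 in
lemma childSet_not_mem (i : ℕ) : childSet g n₀ i ∉ g.nodes := by
  intro hmem
  obtain ⟨π', hπ'⟩ := g.reach ⟨childSet g n₀ i, hmem⟩
  have hmem' : π' ∈ childSet g n₀ i := by
    have := g.canon ⟨childSet g n₀ i, hmem⟩
    simp only at this
    rw [this]
    exact hπ'
  obtain ⟨π, hπ, he⟩ := hmem'
  subst he
  obtain ⟨n', hn', hp, _⟩ := isPos_concat hπ'
  cases pos_unique hp hπ
  rw [h0] at hn'
  exact Nat.not_lt_zero _ hn'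

lemma childSet_inj {i j : ℕ} (he : childSet g n₀ i = childSet g n₀ j) : i = j := by
  obtain ⟨π, hπ⟩ := g.reach n₀
  have : π ++ [i] ∈ childSet g n₀ j := he ▸ ⟨π, hπ, rfl⟩
  obtain ⟨π', _, he'⟩ := this
  have := (List.append_inj' he' rfl).2
  simpa using this

lemma lab_φ₀_n0 : (H g n₀ f).lab (φ₀ g n₀ f n₀) = some f :=
  elab_n0 g n₀ f _ n₀.2 rfl

lemma lab_φ₀_old (n : ↥g.nodes) (hne : n ≠ n₀) :
    (H g n₀ f).lab (φ₀ g n₀ f n) = g.tg.lab n := by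
  have he : (↑n : Set (List ℕ)) ≠ ↑n₀ := fun h => hne (Subtype.ext h)
  exact elab_old g n₀ f _ n.2 he

lemma suc_φ₀_n0 (i : ℕ) (hi : i < S.ar f)
    (hi' : i < (S.bot).ar ((H g n₀ f).lab (φ₀ g n₀ f n₀))) :
    (H g n₀ f).suc (φ₀ g n₀ f n₀) ⟨i, hi'⟩ =
      ⟨childSet g n₀ i, Or.inr ⟨i, hi, rfl⟩⟩ :=
  esuc_n0 g n₀ f (φ₀ g n₀ f n₀) n₀.2 rfl ⟨i, hi'⟩ hi

lemma suc_φ₀_old (n : ↥g.nodes) (hne : n ≠ n₀) (i : ℕ)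
    (hi : i < (S.bot).ar (g.tg.lab n))
    (hi' : i < (S.bot).ar ((H g n₀ f).lab (φ₀ g n₀ f n))) :
    (H g n₀ f).suc (φ₀ g n₀ f n) ⟨i, hi'⟩ = φ₀ g n₀ f (g.tg.suc n ⟨i, hi⟩) := by
  have he : (↑n : Set (List ℕ)) ≠ ↑n₀ := fun h => hne (Subtype.ext h)
  exact esuc_old g n₀ f (φ₀ g n₀ f n) n.2 he ⟨i, hi'⟩ hi

include h0 in
lemma fwd {π : List ℕ} {n : ↥g.nodes} (hp : g.tg.IsPos π n) :
    (H g n₀ f).IsPos π (φ₀ g n₀ f n) := by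
  induction hp with
  | root =>
    have : φ₀ g n₀ f g.tg.root = (H g n₀ f).root := Subtype.ext rfl
    rw [this]
    exact TermGraph.IsPos.root
  | @step π n hp i ih =>
    by_cases hne : n = n₀
    · subst hne
      rw [h0] at i
      exact absurd i.isLt (Nat.not_lt_zero _)
    · have hi' : (i : ℕ) < (S.bot).ar ((H g n₀ f).lab (φ₀ g n₀ f n)) := by
        rw [lab_φ₀_old g n₀ f n hne]; exact i.isLt
      have hstep := TermGraph.IsPos.step ih ⟨(i : ℕ), hi'⟩
      rwa [suc_φ₀_old g n₀ f n hne (i : ℕ) i.isLt hi'] at hstep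

include h0 in
lemma fwd_child {π : List ℕ} (hp : g.tg.IsPos π n₀) (i : ℕ) (hi : i < S.ar f) :
    (H g n₀ f).IsPos (π ++ [i]) ⟨childSet g n₀ i, Or.inr ⟨i, hi, rfl⟩⟩ := by
  have h1 := fwd g n₀ f h0 hp
  have hi' : i < (S.bot).ar ((H g n₀ f).lab (φ₀ g n₀ f n₀)) := by
    rw [lab_φ₀_n0]; exact hi
  have hstep := TermGraph.IsPos.step h1 ⟨i, hi'⟩
  rwa [suc_φ₀_n0 g n₀ f i hi hi'] at hstep

include h0 in
lemma bwd {π : List ℕ} {m : ↥(newNodes g n₀ f)} (hp : (H g n₀ f).IsPos π m) :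
    (∃ n, m = φ₀ g n₀ f n ∧ g.tg.IsPos π n) ∨
    (∃ i, i < S.ar f ∧ (↑m : Set (List ℕ)) = childSet g n₀ i ∧
      ∃ π', π = π' ++ [i] ∧ g.tg.IsPos π' n₀) := by
  induction hp with
  | root => exact Or.inl ⟨g.tg.root, Subtype.ext rfl, TermGraph.IsPos.root⟩
  | @step π m' hp j ih =>
    rcases ih with ⟨n, hm, hπ⟩ | ⟨i, hi, hm, _⟩
    · subst hm
      by_cases hne : n = n₀
      · subst hne
        have harr : (S.bot).ar ((H g n f).lab (φ₀ g n f n)) = S.ar f := by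
          rw [lab_φ₀_n0]; rfl
        have hj : (j : ℕ) < S.ar f := lt_of_lt_of_eq j.isLt harr
        right
        refine ⟨(j : ℕ), hj, ?_, π, rfl, hπ⟩
        have : (H g n f).suc (φ₀ g n f n) ⟨(j : ℕ), j.isLt⟩ =
            ⟨childSet g n (j : ℕ), Or.inr ⟨(j : ℕ), hj, rfl⟩⟩ :=
          suc_φ₀_n0 g n f (j : ℕ) hj j.isLt
        simp only [Fin.eta] at this
        rw [this]
      · have harr : (S.bot).ar ((H g n₀ f).lab (φ₀ g n₀ f n)) =
            (S.bot).ar (g.tg.lab n) := by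
          rw [lab_φ₀_old g n₀ f n hne]
        have hj : (j : ℕ) < (S.bot).ar (g.tg.lab n) := lt_of_lt_of_eq j.isLt harr
        left
        refine ⟨g.tg.suc n ⟨(j : ℕ), hj⟩, ?_, TermGraph.IsPos.step hπ ⟨(j : ℕ), hj⟩⟩
        have := suc_φ₀_old g n₀ f n hne (j : ℕ) hj j.isLt
        simp only [Fin.eta] at this
        rw [this]
    · exfalso
      have : (H g n₀ f).lab m' = none :=
        elab_new g n₀ f m' (hm ▸ childSet_not_mem g n₀ h0 i)
      rw [this] at j
      exact Nat.not_lt_zero _ j.isLt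

lemma φ₀_inj : Function.Injective (φ₀ g n₀ f) := fun _ _ h =>
  Subtype.ext (congrArg (fun m : ↥(newNodes g n₀ f) => (m : Set (List ℕ))) h)

include h0 in
lemma nodePos_φ₀ (n : ↥g.nodes) :
    (H g n₀ f).nodePos (φ₀ g n₀ f n) = g.tg.nodePos n := by
  ext π
  constructor
  · intro hp
    rcases bwd g n₀ f h0 hp with ⟨n', hm, hπ⟩ | ⟨i, _, hm, _⟩
    · rwa [φ₀_inj g n₀ f hm]
    · exact absurd (hm ▸ n.2) (childSet_not_mem g n₀ h0 i)
  · exact fun hp => fwd g n₀ f h0 hp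

include h0 in
lemma nodePos_child (i : ℕ) (hi : i < S.ar f) :
    (H g n₀ f).nodePos ⟨childSet g n₀ i, Or.inr ⟨i, hi, rfl⟩⟩ = childSet g n₀ i := by
  ext ρ
  constructor
  · intro hp
    rcases bwd g n₀ f h0 hp with ⟨n', hm, _⟩ | ⟨i', _, hm, π', hρ, hπ'⟩
    · have hval : (↑(φ₀ g n₀ f n') : Set (List ℕ)) = childSet g n₀ i := by
        rw [← hm]
      exact absurd (hval ▸ n'.2) (childSet_not_mem g n₀ h0 i)
    · simp only at hm
      cases childSet_inj g n₀ hm.symm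
      exact ⟨π', hπ', hρ⟩
  · rintro ⟨π, hπ, rfl⟩
    exact fwd_child g n₀ f h0 hπ i hi

include h0 in
lemma H_reach : (H g n₀ f).Reachable := by
  intro m
  rcases m.2 with hm | ⟨i, hi, he⟩
  · have hme : m = φ₀ g n₀ f ⟨↑m, hm⟩ := Subtype.ext rfl
    obtain ⟨π, hπ⟩ := g.reach ⟨↑m, hm⟩
    exact ⟨π, hme ▸ fwd g n₀ f h0 hπ⟩
  · have hme : m = ⟨childSet g n₀ i, Or.inr ⟨i, hi, rfl⟩⟩ := Subtype.ext he
    obtain ⟨π, hπ⟩ := g.reach n₀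
    exact ⟨π ++ [i], hme ▸ fwd_child g n₀ f h0 hπ i hi⟩

include h0 in
lemma H_canon : ∀ m : ↥(newNodes g n₀ f),
    (↑m : Set (List ℕ)) = (H g n₀ f).nodePos m := by
  intro m
  rcases m.2 with hm | ⟨i, hi, he⟩
  · have hme : m = φ₀ g n₀ f ⟨↑m, hm⟩ := Subtype.ext rfl
    rw [hme, nodePos_φ₀ g n₀ f h0]
    exact g.canon ⟨↑m, hm⟩
  · have hme : m = ⟨childSet g n₀ i, Or.inr ⟨i, hi, rfl⟩⟩ := Subtype.ext he
    rw [hme, nodePos_child g n₀ f h0 i hi]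

noncomputable def hext : CTG S.bot :=
  ⟨newNodes g n₀ f, H g n₀ f, H_reach g n₀ f h0, H_canon g n₀ f h0⟩

include h0 in
lemma acy_fwd {π : List ℕ} (h : g.tg.IsAcyclicPos π) :
    (H g n₀ f).IsAcyclicPos π := by
  intro π₁ π₂ mm hp12 hp2π hm1 hm2
  rcases bwd g n₀ f h0 hm1 with ⟨n₁, e₁, q₁⟩ | ⟨i₁, hi₁, e₁, ρ₁, hρ₁, q₁⟩ <;>
    rcases bwd g n₀ f h0 hm2 with ⟨n₂, e₂, q₂⟩ | ⟨i₂, hi₂, e₂, ρ₂, hρ₂, q₂⟩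
  · cases φ₀_inj g n₀ f (e₁.symm.trans e₂)
    exact h π₁ π₂ n₁ hp12 hp2π q₁ q₂
  · exact absurd (e₂ ▸ (e₁ ▸ n₁.2 : (↑mm : Set (List ℕ)) ∈ g.nodes))
      (childSet_not_mem g n₀ h0 i₂)
  · exact absurd (e₁ ▸ (e₂ ▸ n₂.2 : (↑mm : Set (List ℕ)) ∈ g.nodes))
      (childSet_not_mem g n₀ h0 i₁)
  · cases childSet_inj g n₀ (e₁.symm.trans e₂)
    subst hρ₁; subst hρ₂
    have hlen : ρ₁.length ≤ ρ₂.length := by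
      have := hp12.length_le
      simp only [List.length_append, List.length_cons, List.length_nil] at this
      omega
    have h12 : ρ₁ <+: ρ₂ :=
      List.prefix_of_prefix_length_le
        ((List.prefix_append ρ₁ [i₁]).trans hp12) (List.prefix_append ρ₂ [i₁]) hlen
    have h2π : ρ₂ <+: π := (List.prefix_append ρ₂ [i₁]).trans hp2π
    rw [h ρ₁ ρ₂ n₀ h12 h2π q₁ q₂]

include h0 in
lemma acy_bwd {π : List ℕ} (h : (H g n₀ f).IsAcyclicPos π) :
    g.tg.IsAcyclicPos π := fun π₁ π₂ n hp12 hp2π q₁ q₂ =>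
  h π₁ π₂ (φ₀ g n₀ f n) hp12 hp2π (fwd g n₀ f h0 q₁) (fwd g n₀ f h0 q₂)

include h0 in
lemma leR_hext : CTG.LeR g (hext g n₀ f h0) := by
  refine ⟨φ₀ g n₀ f, ⟨?_, ?_⟩⟩
  · refine ⟨Subtype.ext rfl, ?_, ?_⟩
    · intro n hn
      have hne : n ≠ n₀ := by
        intro he; subst he
        exact hn (by rw [h0]; exact rfl)
      exact lab_φ₀_old g n₀ f n hne
    · intro n hn i hi hi'
      have hne : n ≠ n₀ := by
        intro he; subst he
        exact hn (by rw [h0]; exact rfl)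
      exact (suc_φ₀_old g n₀ f n hne i hi hi').symm
  · intro n hn
    ext π
    have hnp := nodePos_φ₀ g n₀ f h0 n
    constructor
    · intro hmem
      obtain ⟨h1, h2⟩ := hmem
      refine ⟨?_, acy_fwd g n₀ f h0 h2⟩
      have hmem' : π ∈ g.tg.nodePos n := h1
      rw [← hnp] at hmem'
      exact hmem'
    · intro hmem
      obtain ⟨h1, h2⟩ := hmem
      refine ⟨?_, acy_bwd g n₀ f h0 h2⟩
      have hmem' : π ∈ (H g n₀ f).nodePos (φ₀ g n₀ f n) := h1
      rw [hnp] at hmem'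
      exact hmem' 

include h0 in
lemma ne_hext : g ≠ hext g n₀ f h0 := by
  intro he
  obtain ⟨π, hπ⟩ := g.reach n₀
  have e1 : g.labAt π = none := by
    show g.tg.labAt π = none
    rw [labAt_eq hπ, h0]
  have e2 : (hext g n₀ f h0).labAt π = some f := by
    show (H g n₀ f).labAt π = some f
    rw [labAt_eq (fwd g n₀ f h0 hπ), lab_φ₀_n0]
  rw [← he, e1] at e2
  cases e2

end Ext

end Aux
end TGR

namespace TGR

/-- For a non-empty signature `Σ`, the maximal elements of the
canonical partial term graphs under the rigid partial order `≤⊥r` are exactly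
the total canonical term graphs. -/
theorem maximal_iff_total (S : Signature) (hS : Nonempty S.Sym) (g : CTG S.bot) :
    (∀ h : CTG S.bot, CTG.LeR g h → g = h) ↔ g.Total := by
  constructor
  · intro hmax
    by_contra hnt
    have hex : ∃ n : ↥g.nodes, g.tg.lab n = (none : Option S.Sym) := by
      by_contra hko
      exact hnt (fun n he => hko ⟨n, he⟩)
    obtain ⟨n₀, h0'⟩ := hex
    obtain ⟨f⟩ := hS
    exact Aux.ne_hext g n₀ f h0' (hmax _ (Aux.leR_hext g n₀ f h0'))
  · intro ht h hle
    exact Aux.total_max g ht h hle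

end TGR
end

section
/- The relation ≤⊥r (g ≤⊥r h iff there exists a rigid ⊥-homomorphism from g to h) is a partial order on the set of canonical partial term graphs over a signature Σ: it is reflexive, transitive, and antisymmetric. -/
set_option autoImplicit false

namespace TGR

open TermGraph

section Aux

variable {S : Signature} {N M K : Type}

lemma suc_congr (t : TermGraph S N) {m m' : N} (h : m = m') {i : ℕ}
    (hi : i < S.ar (t.lab m)) (hi' : i < S.ar (t.lab m')) :
    t.suc m ⟨i, hi⟩ = t.suc m' ⟨i, hi'⟩ := by
  subst h; rfl

lemma isPos_inv {g : TermGraph S N} {π : List ℕ} {n : N} (h : g.IsPos π n) :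
    (π = [] → n = g.root) ∧
    ∀ (π' : List ℕ) (i : ℕ), π = π' ++ [i] →
      ∃ (m : N) (_ : g.IsPos π' m) (hi : i < S.ar (g.lab m)), n = g.suc m ⟨i, hi⟩ := by
  cases h with
  | root =>
    refine ⟨fun _ => rfl, ?_⟩
    intro π' i hπ
    simp at hπ
  | step hp i =>
    rename_i π₀ n₀
    constructor
    · intro hπ
      simp at hπ
    · intro π' j hπ
      obtain ⟨h1, h2⟩ := List.append_inj' hπ rfl
      subst h1
      have hj : (i : ℕ) = j := by simpa using h2
      subst hj
      exact ⟨n₀, hp, i.isLt, rfl⟩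

/-- A position determines a unique node. -/
lemma isPos_func {g : TermGraph S N} {π : List ℕ} : ∀ {n m : N},
    g.IsPos π n → g.IsPos π m → n = m := by
  induction π using List.reverseRecOn with
  | nil =>
    intro n m h1 h2
    rw [(isPos_inv h1).1 rfl, (isPos_inv h2).1 rfl]
  | append_singleton π i ih =>
    intro n m h1 h2
    obtain ⟨m1, hm1, hi1, rfl⟩ := (isPos_inv h1).2 π i rfl
    obtain ⟨m2, hm2, hi2, rfl⟩ := (isPos_inv h2).2 π i rfl
    exact suc_congr g (ih hm1 hm2) hi1 hi2

/-- A `⊥`-homomorphism preserves positions. -/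
lemma TermGraph.IsDHom.isPos {g : TermGraph S.bot N} {h : TermGraph S.bot M} {φ : N → M}
    (hφ : TermGraph.IsDHom ({none} : Set (Option S.Sym)) g h φ) {π : List ℕ} {n : N}
    (hp : g.IsPos π n) : h.IsPos π (φ n) := by
  induction hp with
  | root => rw [hφ.root_eq]; exact IsPos.root
  | step hp i ih =>
    rename_i π' n'
    have hlab : g.lab n' ∉ ({none} : Set (Option S.Sym)) := by
      intro hmem
      replace hmem : g.lab n' = none := hmem
      have har : S.bot.ar (g.lab n') = 0 := by rw [hmem]; rfl
      have := i.isLt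
      omega
    have hl := hφ.lab_eq n' hlab
    have hi' : (i : ℕ) < S.bot.ar (h.lab (φ n')) := by rw [hl]; exact i.isLt
    have hsuc : φ (g.suc n' i) = h.suc (φ n') ⟨(i : ℕ), hi'⟩ := by
      rw [← hφ.suc_eq n' hlab (i : ℕ) i.isLt hi']
    rw [hsuc]
    exact IsPos.step ih ⟨(i : ℕ), hi'⟩

lemma TermGraph.ext' {g h : TermGraph S N} (hl : g.lab = h.lab)
    (hs : ∀ (n : N) (i : ℕ) (hi : i < S.ar (g.lab n)) (hi' : i < S.ar (h.lab n)),
      g.suc n ⟨i, hi⟩ = h.suc n ⟨i, hi'⟩)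
    (hr : g.root = h.root) : g = h := by
  obtain ⟨gl, gs, gr⟩ := g
  obtain ⟨hl', hs', hr'⟩ := h
  dsimp at *
  subst hl hr
  congr 1
  funext n i
  exact hs n (i : ℕ) i.isLt i.isLt

end Aux

/-- The relation `≤⊥r` (there exists a rigid `⊥`-homomorphism)
is a partial order on canonical partial term graphs: reflexive, transitive and
antisymmetric. -/
theorem leR_partial_order (S : Signature) :
    (∀ g : CTG S.bot, CTG.LeR g g) ∧
    (∀ g h k : CTG S.bot, CTG.LeR g h → CTG.LeR h k → CTG.LeR g k) ∧
    (∀ g h : CTG S.bot, CTG.LeR g h → CTG.LeR h g → g = h) := by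
  refine ⟨?_, ?_, ?_⟩
  · -- reflexivity
    intro g
    refine ⟨id, ⟨?_, ?_⟩⟩
    · exact ⟨rfl, fun n _ => rfl, fun n _ i hi hi' => rfl⟩
    · intro n _; rfl
  · -- transitivity
    intro g h k ⟨φ, hφ, hφr⟩ ⟨ψ, hψ, hψr⟩
    refine ⟨ψ ∘ φ, ⟨?_, ?_⟩⟩
    · constructor
      · show ψ (φ g.tg.root) = k.tg.root
        rw [hφ.root_eq, hψ.root_eq]
      · intro n hn
        have h1 := hφ.lab_eq n hn
        have h2 : h.tg.lab (φ n) ∉ ({none} : Set (Option S.Sym)) := by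
          rw [h1]; exact hn
        have h3 := hψ.lab_eq (φ n) h2
        show k.tg.lab (ψ (φ n)) = g.tg.lab n
        rw [h3, h1]
      · intro n hn i hi hi'
        have h1 := hφ.lab_eq n hn
        have h2 : h.tg.lab (φ n) ∉ ({none} : Set (Option S.Sym)) := by
          rw [h1]; exact hn
        have hm : i < S.bot.ar (h.tg.lab (φ n)) := by rw [h1]; exact hi
        show ψ (φ (g.tg.suc n ⟨i, hi⟩)) = k.tg.suc (ψ (φ n)) ⟨i, hi'⟩
        rw [hφ.suc_eq n hn i hi hm, hψ.suc_eq (φ n) h2 i hm hi']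
    · intro n hn
      have h1 := hφ.lab_eq n hn
      have h2 : h.tg.lab (φ n) ∉ ({none} : Set (Option S.Sym)) := by
        rw [h1]; exact hn
      show g.tg.nodePosAcy n = k.tg.nodePosAcy (ψ (φ n))
      rw [hφr n hn, hψr (φ n) h2]
  · -- antisymmetry
    intro g h ⟨φ, hφ, _⟩ ⟨ψ, hψ, _⟩
    have hψφ : ∀ n, ψ (φ n) = n := by
      intro n
      obtain ⟨π, hπ⟩ := g.reach n
      exact isPos_func (hψ.isPos (hφ.isPos hπ)) hπ
    have hφψ : ∀ m, φ (ψ m) = m := by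
      intro m
      obtain ⟨π, hπ⟩ := h.reach m
      exact isPos_func (hφ.isPos (hψ.isPos hπ)) hπ
    have hpos : ∀ n, g.tg.nodePos n = h.tg.nodePos (φ n) := by
      intro n
      ext π
      constructor
      · intro hπ
        exact hφ.isPos hπ
      · intro hπ
        have := hψ.isPos hπ
        rw [hψφ n] at this
        exact this
    have hval : ∀ n : ↥g.nodes, (n : Set (List ℕ)) = ((φ n : ↥h.nodes) : Set (List ℕ)) := by
      intro n
      rw [g.canon n, h.canon (φ n)]
      exact hpos n
    have hnodes : g.nodes = h.nodes := by
      ext A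
      constructor
      · intro hA
        have h1 : A = ((φ ⟨A, hA⟩ : ↥h.nodes) : Set (List ℕ)) := hval ⟨A, hA⟩
        rw [h1]
        exact (φ ⟨A, hA⟩).2
      · intro hA
        have h1 : A = ((ψ ⟨A, hA⟩ : ↥g.nodes) : Set (List ℕ)) := by
          have h2 := hval (ψ ⟨A, hA⟩)
          rw [hφψ ⟨A, hA⟩] at h2
          exact h2.symm
        rw [h1]
        exact (ψ ⟨A, hA⟩).2
    obtain ⟨Ng, tg, rg, cg⟩ := g
    obtain ⟨Nh, th, rh, ch⟩ := h
    dsimp at *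
    subst hnodes
    have hφid : ∀ n, φ n = n := fun n => Subtype.ext (hval n).symm
    have hψid : ∀ m, ψ m = m := fun m => ((hφid (ψ m)).symm.trans (hφψ m))
    have hlab : tg.lab = th.lab := by
      funext n
      by_cases hg : tg.lab n = none
      · by_cases hh : th.lab n = none
        · rw [hg, hh]
        · have h1 := hψ.lab_eq n (fun hm => hh hm)
          rw [hψid n] at h1
          exact h1
      · have h1 := hφ.lab_eq n (fun hm => hg hm)
        rw [hφid n] at h1
        exact h1.symm
    have htg : tg = th := by
      apply TermGraph.ext' hlab
      · intro n i hi hi'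
        by_cases hg : tg.lab n = none
        · exact absurd hi (by rw [hg]; exact Nat.not_lt_zero _)
        · have hi2 : i < S.bot.ar (th.lab (φ n)) := by rw [hφid n]; exact hi'
          have h1 := hφ.suc_eq n (fun hm => hg hm) i hi hi2
          calc tg.suc n ⟨i, hi⟩ = φ (tg.suc n ⟨i, hi⟩) := (hφid _).symm
            _ = th.suc (φ n) ⟨i, hi2⟩ := h1
            _ = th.suc n ⟨i, hi'⟩ := suc_congr th (hφid n) hi2 hi'
      · have h1 := hφ.root_eq
        rw [hφid] at h1
        exact h1
    subst htg
    rfl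

end TGR
end
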